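/- arXiv:1202.1520 — 5 statements merged into one kernel-verified Lean document; each statement's English description precedes it below -/
import Mathlib

section
/- For every integer n ≥ 2 and all integers p, m, k, the number of (n−1)×(n−1) alternating sign matrices A with ν(A) = p, μ(A) = m and ρ₁(A) = k equals the number of n×n alternating sign matrices A with ν(A) = p, μ(A) = m, ρ₁(A) = k and ρ₂(A) = 0. Consequently Z^ASM_n(x,y,z,0) = Z^ASM_{n−1}(x,y,z,1). -/
namespace ASMDPP

/-- `A` is an alternating sign matrix: entries in `{-1,0,1}`, all partial row and
column sums in `{0,1}`, and all full row and column sums equal to `1` (this is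
equivalent to the nonzero entries of each row and column alternating in sign and
summing to `1`). -/
def IsASM {n : ℕ} (A : Matrix (Fin n) (Fin n) ℤ) : Prop :=
  (∀ i j, A i j = -1 ∨ A i j = 0 ∨ A i j = 1) ∧
  (∀ i j : Fin n, (∑ j' ∈ Finset.Iic j, A i j') = 0 ∨ (∑ j' ∈ Finset.Iic j, A i j') = 1) ∧
  (∀ i j : Fin n, (∑ i' ∈ Finset.Iic i, A i' j) = 0 ∨ (∑ i' ∈ Finset.Iic i, A i' j) = 1) ∧
  (∀ i, (∑ j, A i j) = 1) ∧
  (∀ j, (∑ i, A i j) = 1)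

/-- The set of `n × n` alternating sign matrices. -/
def ASMs (n : ℕ) : Set (Matrix (Fin n) (Fin n) ℤ) := {A | IsASM A}

/-- `ν(A) = ∑_{i < i', j' ≤ j} A i j * A i' j'`, the number of generalized inversions. -/
def nuA {n : ℕ} (A : Matrix (Fin n) (Fin n) ℤ) : ℤ :=
  ∑ p ∈ (Finset.univ : Finset ((Fin n × Fin n) × Fin n × Fin n)).filter
      (fun p => p.1.1 < p.2.1 ∧ p.2.2 ≤ p.1.2),
    A p.1.1 p.1.2 * A p.2.1 p.2.2

/-- `μ(A)`: the number of entries of `A` equal to `-1`. -/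
def muA {n : ℕ} (A : Matrix (Fin n) (Fin n) ℤ) : ℕ :=
  ((Finset.univ : Finset (Fin n × Fin n)).filter (fun p => A p.1 p.2 = -1)).card

/-- `ρ₁(A)`: the number of `0`'s to the left of the `1` in the first row of `A`. -/
def rho1A {n : ℕ} (A : Matrix (Fin n) (Fin n) ℤ) : ℕ :=
  ((Finset.univ : Finset (Fin n × Fin n)).filter
    (fun p => (p.1 : ℕ) = 0 ∧ A p.1 p.2 = 0 ∧ ∃ j', p.2 < j' ∧ A p.1 j' = 1)).card

/-- `ρ₂(A)`: the number of `0`'s to the right of the `1` in the last row of `A`. -/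
def rho2A {n : ℕ} (A : Matrix (Fin n) (Fin n) ℤ) : ℕ :=
  ((Finset.univ : Finset (Fin n × Fin n)).filter
    (fun p => (p.1 : ℕ) = n - 1 ∧ A p.1 p.2 = 0 ∧ ∃ j', j' < p.2 ∧ A p.1 j' = 1)).card

/-- The doubly-refined ASM generating function `Z^ASM_n(x,y,z₁,z₂)`. -/
noncomputable def ZASM2 {R : Type*} [CommRing R] (n : ℕ) (x y z₁ z₂ : R) : R :=
  ∑ᶠ A ∈ ASMs n, x ^ (nuA A).toNat * y ^ muA A * z₁ ^ rho1A A * z₂ ^ rho2A A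

/-- The singly-refined ASM generating function `Z^ASM_n(x,y,z) = Z^ASM_n(x,y,z,1)`. -/
noncomputable def ZASM1 {R : Type*} [CommRing R] (n : ℕ) (x y z : R) : R :=
  ZASM2 n x y z 1

open Finset

lemma Iic_last_eq_univ (m : ℕ) : Finset.Iic (Fin.last m) = Finset.univ := by
  ext x; simp [Fin.le_last]

lemma Iic_castSucc_eq {m : ℕ} (j : Fin m) :
    Finset.Iic (Fin.castSucc j) = (Finset.Iic j).map Fin.castSuccEmb := by
  ext x
  simp only [Finset.mem_Iic, Finset.mem_map, Fin.coe_castSuccEmb]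
  constructor
  · intro hx
    have hx' : (x : ℕ) ≤ (j : ℕ) := hx
    exact ⟨⟨x, lt_of_le_of_lt hx' j.isLt⟩, hx', Fin.ext rfl⟩
  · rintro ⟨y, hy, rfl⟩
    exact Fin.castSucc_le_castSucc_iff.mpr hy

/-- extend an `m×m` matrix to `(m+1)×(m+1)` by adding a last row/column that is
zero except for a `1` in the corner. -/
def ext1 (m : ℕ) (A : Matrix (Fin m) (Fin m) ℤ) : Matrix (Fin (m+1)) (Fin (m+1)) ℤ :=
  fun i j =>
    Fin.lastCases (Fin.lastCases 1 (fun _ => (0:ℤ)) j)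
      (fun i' => Fin.lastCases 0 (fun j' => A i' j') j) i

@[simp] lemma ext1_cc {m : ℕ} (A : Matrix (Fin m) (Fin m) ℤ) (i j : Fin m) :
    ext1 m A i.castSucc j.castSucc = A i j := by
  simp [ext1]

@[simp] lemma ext1_cl {m : ℕ} (A : Matrix (Fin m) (Fin m) ℤ) (i : Fin m) :
    ext1 m A i.castSucc (Fin.last m) = 0 := by
  simp [ext1]

@[simp] lemma ext1_lc {m : ℕ} (A : Matrix (Fin m) (Fin m) ℤ) (j : Fin m) :
    ext1 m A (Fin.last m) j.castSucc = 0 := by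
  simp [ext1]

@[simp] lemma ext1_ll {m : ℕ} (A : Matrix (Fin m) (Fin m) ℤ) :
    ext1 m A (Fin.last m) (Fin.last m) = 1 := by
  simp [ext1]

lemma ext1_isASM {m : ℕ} {A : Matrix (Fin m) (Fin m) ℤ} (hA : IsASM A) :
    IsASM (ext1 m A) := by
  obtain ⟨h1, h2, h3, h4, h5⟩ := hA
  refine ⟨?_, ?_, ?_, ?_, ?_⟩
  · intro i j
    cases i using Fin.lastCases with
    | last =>
      cases j using Fin.lastCases with
      | last => simp
      | cast j => simp
    | cast i =>
      cases j using Fin.lastCases with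
      | last => simp
      | cast j => simpa using h1 i j
  · intro i j
    cases i using Fin.lastCases with
    | last =>
      cases j using Fin.lastCases with
      | last =>
        right
        rw [Iic_last_eq_univ, Fin.sum_univ_castSucc]
        simp
      | cast j =>
        left
        rw [Iic_castSucc_eq, Finset.sum_map]
        simp only [Fin.coe_castSuccEmb, ext1_lc]
        exact Finset.sum_const_zero
    | cast i =>
      cases j using Fin.lastCases with
      | last =>
        right
        rw [Iic_last_eq_univ, Fin.sum_univ_castSucc]
        simpa using h4 i
      | cast j =>
        rw [Iic_castSucc_eq, Finset.sum_map]
        simp only [Fin.coe_castSuccEmb, ext1_cc]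
        exact h2 i j
  · intro i j
    cases i using Fin.lastCases with
    | last =>
      cases j using Fin.lastCases with
      | last =>
        right
        rw [Iic_last_eq_univ, Fin.sum_univ_castSucc]
        simp
      | cast j =>
        right
        rw [Iic_last_eq_univ, Fin.sum_univ_castSucc]
        simpa using h5 j
    | cast i =>
      cases j using Fin.lastCases with
      | last =>
        left
        rw [Iic_castSucc_eq, Finset.sum_map]
        simp only [Fin.coe_castSuccEmb, ext1_cl]
        exact Finset.sum_const_zero
      | cast j =>
        rw [Iic_castSucc_eq, Finset.sum_map]
        simp only [Fin.coe_castSuccEmb, ext1_cc]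
        exact h3 i j
  · intro i
    cases i using Fin.lastCases with
    | last =>
      rw [Fin.sum_univ_castSucc]
      simp
    | cast i =>
      rw [Fin.sum_univ_castSucc]
      simpa using h4 i
  · intro j
    cases j using Fin.lastCases with
    | last =>
      rw [Fin.sum_univ_castSucc]
      simp
    | cast j =>
      rw [Fin.sum_univ_castSucc]
      simpa using h5 j


lemma ext1_injective (m : ℕ) : Function.Injective (ext1 m) := by
  intro A B h
  funext i j
  have := congrFun (congrFun h i.castSucc) j.castSucc
  simpa using this

lemma nuA_ext1 {m : ℕ} (A : Matrix (Fin m) (Fin m) ℤ) : nuA (ext1 m A) = nuA A := by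
  classical
  unfold nuA
  set ι : (Fin m × Fin m) × Fin m × Fin m → (Fin (m+1) × Fin (m+1)) × Fin (m+1) × Fin (m+1) :=
    fun p => ((p.1.1.castSucc, p.1.2.castSucc), p.2.1.castSucc, p.2.2.castSucc) with hι
  have hinj : Function.Injective ι := by
    rintro ⟨⟨a,b⟩,c,d⟩ ⟨⟨a',b'⟩,c',d'⟩ h
    simp only [hι, Prod.mk.injEq] at h
    obtain ⟨⟨h1,h2⟩,h3,h4⟩ := h
    simp [Fin.castSucc_inj] at h1 h2 h3 h4
    simp [h1,h2,h3,h4]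
  set Ss := (Finset.univ : Finset ((Fin m × Fin m) × Fin m × Fin m)).filter
      (fun p => p.1.1 < p.2.1 ∧ p.2.2 ≤ p.1.2) with hSs
  set Sb := (Finset.univ : Finset ((Fin (m+1) × Fin (m+1)) × Fin (m+1) × Fin (m+1))).filter
      (fun p => p.1.1 < p.2.1 ∧ p.2.2 ≤ p.1.2) with hSb
  have hsub : Ss.image ι ⊆ Sb := by
    intro p hp
    obtain ⟨q, hq, rfl⟩ := Finset.mem_image.mp hp
    obtain ⟨-, hq1, hq2⟩ := Finset.mem_filter.mp hq
    refine Finset.mem_filter.mpr ⟨Finset.mem_univ _, ?_, ?_⟩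
    · exact Fin.castSucc_lt_castSucc_iff.mpr hq1
    · exact Fin.castSucc_le_castSucc_iff.mpr hq2
  have hzero : ∀ p ∈ Sb, p ∉ Ss.image ι →
      ext1 m A p.1.1 p.1.2 * ext1 m A p.2.1 p.2.2 = 0 := by
    rintro ⟨⟨a,b⟩,c,d⟩ hp hni
    obtain ⟨-, hlt, hle⟩ := Finset.mem_filter.mp hp
    simp only at hlt hle
    cases a using Fin.lastCases with
    | last => exact absurd hlt (not_lt.mpr (Fin.le_last _))
    | cast a =>
      cases b using Fin.lastCases with
      | last => simp
      | cast b =>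
        cases d using Fin.lastCases with
        | last => exact absurd hle (not_le.mpr (Fin.castSucc_lt_last b))
        | cast d =>
          cases c using Fin.lastCases with
          | last => simp
          | cast c =>
            exfalso
            apply hni
            refine Finset.mem_image.mpr ⟨((a,b),c,d), ?_, rfl⟩
            refine Finset.mem_filter.mpr ⟨Finset.mem_univ _, ?_, ?_⟩
            · exact Fin.castSucc_lt_castSucc_iff.mp hlt
            · exact Fin.castSucc_le_castSucc_iff.mp hle
  rw [← Finset.sum_subset hsub hzero, Finset.sum_image (fun x _ y _ h => hinj h)]
  simp [hι]

lemma muA_ext1 {m : ℕ} (A : Matrix (Fin m) (Fin m) ℤ) : muA (ext1 m A) = muA A := by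
  classical
  unfold muA
  have : ((Finset.univ : Finset (Fin (m+1) × Fin (m+1))).filter
      (fun p => ext1 m A p.1 p.2 = -1)) =
      ((Finset.univ : Finset (Fin m × Fin m)).filter (fun p => A p.1 p.2 = -1)).image
        (fun p => (p.1.castSucc, p.2.castSucc)) := by
    ext ⟨a, b⟩
    simp only [Finset.mem_filter, Finset.mem_univ, true_and, Finset.mem_image, Prod.mk.injEq]
    constructor
    · intro h
      cases a using Fin.lastCases with
      | last =>
        cases b using Fin.lastCases with
        | last => simp at h
        | cast b => simp at h
      | cast a =>
        cases b using Fin.lastCases with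
        | last => simp at h
        | cast b => exact ⟨(a, b), by simpa using h, rfl, rfl⟩
    · rintro ⟨⟨a', b'⟩, h, rfl, rfl⟩
      simpa using h
  rw [this, Finset.card_image_of_injective]
  intro p q h
  simp only [Prod.mk.injEq] at h
  exact Prod.ext (Fin.castSucc_inj.mp h.1) (Fin.castSucc_inj.mp h.2)

lemma rho1A_ext1 {m : ℕ} (hm : 1 ≤ m) (A : Matrix (Fin m) (Fin m) ℤ) :
    rho1A (ext1 m A) = rho1A A := by
  classical
  unfold rho1A
  have : ((Finset.univ : Finset (Fin (m+1) × Fin (m+1))).filter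
      (fun p => (p.1 : ℕ) = 0 ∧ ext1 m A p.1 p.2 = 0 ∧
        ∃ j', p.2 < j' ∧ ext1 m A p.1 j' = 1)) =
      ((Finset.univ : Finset (Fin m × Fin m)).filter
        (fun p => (p.1 : ℕ) = 0 ∧ A p.1 p.2 = 0 ∧ ∃ j', p.2 < j' ∧ A p.1 j' = 1)).image
        (fun p => (p.1.castSucc, p.2.castSucc)) := by
    ext ⟨a, b⟩
    simp only [Finset.mem_filter, Finset.mem_univ, true_and, Finset.mem_image, Prod.mk.injEq]
    constructor
    · rintro ⟨ha, hz, j', hlt, hone⟩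
      cases a using Fin.lastCases with
      | last => simp [Fin.val_last] at ha; omega
      | cast a =>
        cases j' using Fin.lastCases with
        | last => simp at hone
        | cast j' =>
          cases b using Fin.lastCases with
          | last => exact absurd hlt (not_lt.mpr (Fin.le_last _))
          | cast b =>
            refine ⟨(a, b), ⟨by simpa using ha, by simpa using hz,
              j', Fin.castSucc_lt_castSucc_iff.mp hlt, by simpa using hone⟩, rfl, rfl⟩
    · rintro ⟨⟨a', b'⟩, ⟨ha, hz, j', hlt, hone⟩, rfl, rfl⟩
      refine ⟨by simpa using ha, by simpa using hz,
        j'.castSucc, Fin.castSucc_lt_castSucc_iff.mpr hlt, by simpa using hone⟩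
  rw [this, Finset.card_image_of_injective]
  intro p q h
  simp only [Prod.mk.injEq] at h
  exact Prod.ext (Fin.castSucc_inj.mp h.1) (Fin.castSucc_inj.mp h.2)

lemma rho2A_ext1 {m : ℕ} (A : Matrix (Fin m) (Fin m) ℤ) : rho2A (ext1 m A) = 0 := by
  classical
  unfold rho2A
  rw [Finset.card_eq_zero, Finset.filter_eq_empty_iff]
  rintro ⟨a, b⟩ -
  rintro ⟨ha, hz, j', hlt, hone⟩
  have ha' : a = Fin.last m := by
    apply Fin.ext
    simpa using ha
  subst ha'
  cases j' using Fin.lastCases with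
  | last => exact absurd hlt (not_lt.mpr (Fin.le_last _))
  | cast j' => simp at hone


lemma ext1_surj {k : ℕ} {B : Matrix (Fin (k+2)) (Fin (k+2)) ℤ}
    (hB : IsASM B) (h2 : rho2A B = 0) :
    ∃ A : Matrix (Fin (k+1)) (Fin (k+1)) ℤ, IsASM A ∧ ext1 (k+1) A = B := by
  classical
  obtain ⟨b1, b2, b3, b4, b5⟩ := hB
  have hIic : Finset.Iic ((Fin.last k).castSucc) =
      (Finset.univ : Finset (Fin (k+1))).map Fin.castSuccEmb := by
    rw [Iic_castSucc_eq, Iic_last_eq_univ]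
  have rowA : ∀ j, B (Fin.last (k+1)) j = 0 ∨ B (Fin.last (k+1)) j = 1 := by
    intro j
    have hps := b3 ((Fin.last k).castSucc) j
    rw [hIic, Finset.sum_map] at hps
    simp only [Fin.coe_castSuccEmb] at hps
    have hs := b5 j
    rw [Fin.sum_univ_castSucc] at hs
    rcases hps with h | h
    · right; linarith
    · left; linarith
  have colA : ∀ i, B i (Fin.last (k+1)) = 0 ∨ B i (Fin.last (k+1)) = 1 := by
    intro i
    have hps := b2 i ((Fin.last k).castSucc)
    rw [hIic, Finset.sum_map] at hps
    simp only [Fin.coe_castSuccEmb] at hps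
    have hs := b4 i
    rw [Fin.sum_univ_castSucc] at hs
    rcases hps with h | h
    · right; linarith
    · left; linarith
  have corner : B (Fin.last (k+1)) (Fin.last (k+1)) = 1 := by
    by_contra h
    have h0 : B (Fin.last (k+1)) (Fin.last (k+1)) = 0 := (rowA _).resolve_right h
    have hs := b4 (Fin.last (k+1))
    rw [Fin.sum_univ_castSucc, h0, add_zero] at hs
    have hex : ∃ j : Fin (k+1), B (Fin.last (k+1)) j.castSucc = 1 := by
      by_contra hall
      push_neg at hall
      have hz : ∀ j : Fin (k+1), B (Fin.last (k+1)) j.castSucc = 0 :=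
        fun j => (rowA _).resolve_right (hall j)
      rw [Finset.sum_congr rfl (fun j _ => hz j), Finset.sum_const_zero] at hs
      exact absurd hs (by norm_num)
    obtain ⟨j, hj⟩ := hex
    have hmem : (Fin.last (k+1), Fin.last (k+1)) ∈
        ((Finset.univ : Finset (Fin (k+2) × Fin (k+2))).filter
          (fun p => (p.1 : ℕ) = (k+2) - 1 ∧ B p.1 p.2 = 0 ∧
            ∃ j', j' < p.2 ∧ B p.1 j' = 1)) := by
      refine Finset.mem_filter.mpr ⟨Finset.mem_univ _, by simp, h0,
        j.castSucc, Fin.castSucc_lt_last j, hj⟩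
    unfold rho2A at h2
    rw [Finset.card_eq_zero, Finset.eq_empty_iff_forall_notMem] at h2
    exact h2 _ hmem
  have zeroRow : ∀ j : Fin (k+1), B (Fin.last (k+1)) j.castSucc = 0 := by
    have hs := b4 (Fin.last (k+1))
    rw [Fin.sum_univ_castSucc, corner] at hs
    have hz : ∑ j : Fin (k+1), B (Fin.last (k+1)) j.castSucc = 0 := by linarith
    intro j
    refine (Finset.sum_eq_zero_iff_of_nonneg ?_).mp hz j (Finset.mem_univ _)
    intro i _
    rcases rowA i.castSucc with h | h <;> rw [h] <;> norm_num
  have zeroCol : ∀ i : Fin (k+1), B i.castSucc (Fin.last (k+1)) = 0 := by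
    have hs := b5 (Fin.last (k+1))
    rw [Fin.sum_univ_castSucc, corner] at hs
    have hz : ∑ i : Fin (k+1), B i.castSucc (Fin.last (k+1)) = 0 := by linarith
    intro i
    refine (Finset.sum_eq_zero_iff_of_nonneg ?_).mp hz i (Finset.mem_univ _)
    intro i' _
    rcases colA i'.castSucc with h | h <;> rw [h] <;> norm_num
  refine ⟨fun i j => B i.castSucc j.castSucc, ⟨fun i j => b1 _ _, ?_, ?_, ?_, ?_⟩, ?_⟩
  · intro i j
    have := b2 i.castSucc j.castSucc
    rw [Iic_castSucc_eq, Finset.sum_map] at this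
    simpa using this
  · intro i j
    have := b3 i.castSucc j.castSucc
    rw [Iic_castSucc_eq, Finset.sum_map] at this
    simpa using this
  · intro i
    have := b4 i.castSucc
    rw [Fin.sum_univ_castSucc, zeroCol i, add_zero] at this
    exact this
  · intro j
    have := b5 j.castSucc
    rw [Fin.sum_univ_castSucc, zeroRow j, add_zero] at this
    exact this
  · funext i j
    cases i using Fin.lastCases with
    | last =>
      cases j using Fin.lastCases with
      | last => exact (ext1_ll _).trans corner.symm
      | cast j => exact (ext1_lc _ j).trans (zeroRow j).symm
    | cast i =>
      cases j using Fin.lastCases with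
      | last => exact (ext1_cl _ i).trans (zeroCol i).symm
      | cast j => exact ext1_cc _ i j


lemma ext1_bijOn (k : ℕ) :
    Set.BijOn (ext1 (k+1)) (ASMs (k+1)) {B ∈ ASMs (k+2) | rho2A B = 0} := by
  refine ⟨fun A hA => ⟨ext1_isASM hA, rho2A_ext1 A⟩, (ext1_injective (k+1)).injOn, ?_⟩
  rintro B ⟨hASM, h4⟩
  obtain ⟨A, hA, rfl⟩ := ext1_surj hASM h4
  exact ⟨A, hA, rfl⟩


/-- The `(n-1) × (n-1)` ASMs with `ν = p`, `μ = m`, `ρ₁ = k` are equinumerous with the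
`n × n` ASMs with `ν = p`, `μ = m`, `ρ₁ = k`, `ρ₂ = 0`; consequently
`Z^ASM_n(x,y,z,0) = Z^ASM_{n-1}(x,y,z,1)`. -/
theorem ASM_z2_zero (n : ℕ) (hn : 2 ≤ n) :
    (∀ p m k : ℤ,
      {A ∈ ASMs (n - 1) | nuA A = p ∧ (muA A : ℤ) = m ∧ (rho1A A : ℤ) = k}.ncard =
      {A ∈ ASMs n | nuA A = p ∧ (muA A : ℤ) = m ∧ (rho1A A : ℤ) = k ∧
        rho2A A = 0}.ncard) ∧
    (∀ (R : Type) (_ : CommRing R) (x y z : R),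
      ZASM2 n x y z 0 = ZASM2 (n - 1) x y z 1) := by

  obtain ⟨k, rfl⟩ : ∃ k, n = k + 2 := ⟨n - 2, by omega⟩
  have hsub : k + 2 - 1 = k + 1 := rfl
  constructor
  · intro p m' k'
    rw [hsub]
    set s := {A ∈ ASMs (k+1) | nuA A = p ∧ (muA A : ℤ) = m' ∧ (rho1A A : ℤ) = k'} with hs
    set t := {A ∈ ASMs (k+2) | nuA A = p ∧ (muA A : ℤ) = m' ∧ (rho1A A : ℤ) = k' ∧
        rho2A A = 0} with ht
    have hbij : Set.BijOn (ext1 (k+1)) s t := by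
      refine ⟨?_, (ext1_injective (k+1)).injOn, ?_⟩
      · rintro A ⟨hA, h1, h2, h3⟩
        exact ⟨ext1_isASM hA, by rw [nuA_ext1]; exact h1, by rw [muA_ext1]; exact h2,
          by rw [rho1A_ext1 (by omega)]; exact h3, rho2A_ext1 A⟩
      · rintro B ⟨hASM, h1, h2, h3, h4⟩
        obtain ⟨A, hA, rfl⟩ := ext1_surj hASM h4
        refine ⟨A, ⟨hA, ?_, ?_, ?_⟩, rfl⟩
        · rw [← nuA_ext1]; exact h1
        · rw [← muA_ext1]; exact h2
        · rw [← rho1A_ext1 (show 1 ≤ k + 1 by omega)]; exact h3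
    rw [← hbij.image_eq, Set.ncard_image_of_injOn hbij.injOn]
  · intro R _ x y z
    rw [hsub]
    unfold ZASM2
    have step1 : ∑ᶠ A ∈ ASMs (k+2),
        x ^ (nuA A).toNat * y ^ muA A * z ^ rho1A A * (0:R) ^ rho2A A =
        ∑ᶠ A ∈ {B ∈ ASMs (k+2) | rho2A B = 0},
        x ^ (nuA A).toNat * y ^ muA A * z ^ rho1A A * (0:R) ^ rho2A A := by
      apply finsum_mem_inter_support_eq'
      intro B hB
      have hρ : rho2A B = 0 := by
        by_contra h
        apply hB
        simp [zero_pow h]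
      constructor
      · intro h; exact ⟨h, hρ⟩
      · intro h; exact h.1
    rw [step1]
    refine (finsum_mem_eq_of_bijOn (ext1 (k+1)) (ext1_bijOn k) ?_).symm
    intro A hA
    simp [nuA_ext1, muA_ext1, rho1A_ext1 (show 1 ≤ k + 1 by omega), rho2A_ext1]

end ASMDPP
end

section
/- For every integer n ≥ 2 and all integers p, m, k, the number of descending plane partitions D with each part at most n−1 satisfying ν(D) = p, μ(D) = m and ρ₁(D) = k equals the number of descending plane partitions D with each part at most n satisfying ν(D) = p, μ(D) = m, ρ₁(D) = k and ρ₂(D) = 0. Consequently Z^DPP_n(x,y,z,0) = Z^DPP_{n−1}(x,y,z,1). -/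
namespace ASMDPP

/-- The part of `D` in row `i`, offset `k` (both 0-indexed); this is the part
`D_{i+1, i+1+k}` (in column `j = i + 1 + k`) of the descending plane partition,
and `0` if absent. -/
def dppPart (D : List (List ℕ)) (i k : ℕ) : ℕ := (D.getD i []).getD k 0

/-- `D` is a descending plane partition with all parts at most `n`, presented as the
list of its rows: row `i` (1-indexed) occupies columns `i, …, i + λ_i - 1` and is
recorded as a list of length `λ_i`.  The conditions are: rows are nonempty lists of
parts `1 ≤ a ≤ n`, weakly decreasing along each row; parts strictly decrease down
columns; and `D_{ii} > λ_i ≥ D_{i+1,i+1}` for each row `i`. -/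
def IsDPP (n : ℕ) (D : List (List ℕ)) : Prop :=
  (∀ r ∈ D, r ≠ [] ∧ r.Chain' (· ≥ ·) ∧ ∀ a ∈ r, 1 ≤ a ∧ a ≤ n) ∧
  (∀ i k, dppPart D (i + 1) k ≠ 0 → dppPart D (i + 1) k < dppPart D i (k + 1)) ∧
  (∀ i, i < D.length → (D.getD i []).length < dppPart D i 0) ∧
  (∀ i, dppPart D (i + 1) 0 ≤ (D.getD i []).length)

/-- The set of descending plane partitions with each part at most `n`. -/
def DPPs (n : ℕ) : Set (List (List ℕ)) := {D | IsDPP n D}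

/-- `ν(D)`: the number of nonspecial parts of `D`, i.e. parts with `D_{ij} > j - i`
(the part at offset `k` of a row lies in column `j = i + k`, so this reads `part > k`). -/
def nuD (D : List (List ℕ)) : ℕ :=
  ∑ i ∈ Finset.range D.length,
    ((Finset.range (D.getD i []).length).filter (fun k => k < dppPart D i k)).card

/-- `μ(D)`: the number of special parts of `D`, i.e. parts with `D_{ij} ≤ j - i`. -/
def muD (D : List (List ℕ)) : ℕ :=
  ∑ i ∈ Finset.range D.length,
    ((Finset.range (D.getD i []).length).filter (fun k => dppPart D i k ≤ k)).card

/-- `ρ₁(D)`: the number of parts of `D` equal to `n`. -/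
def rho1D (n : ℕ) (D : List (List ℕ)) : ℕ := (D.map fun r => r.count n).sum

/-- `ρ₂(D)`: the number of parts of `D` equal to `n - 1` plus the number of rows of `D`
of length `n - 1`. -/
def rho2D (n : ℕ) (D : List (List ℕ)) : ℕ :=
  (D.map fun r => r.count (n - 1)).sum + (D.filter fun r => r.length = n - 1).length

/-- The doubly-refined DPP generating function `Z^DPP_n(x,y,z₁,z₂)`. -/
noncomputable def ZDPP2 {R : Type*} [CommRing R] (n : ℕ) (x y z₁ z₂ : R) : R :=
  ∑ᶠ D ∈ DPPs n, x ^ nuD D * y ^ muD D * z₁ ^ rho1D n D * z₂ ^ rho2D n D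

/-- The singly-refined DPP generating function `Z^DPP_n(x,y,z) = Z^DPP_n(x,y,z,1)`. -/
noncomputable def ZDPP1 {R : Type*} [CommRing R] (n : ℕ) (x y z : R) : R :=
  ZDPP2 n x y z 1

/-! ### Auxiliary material for the proof -/

/-- Replace every part equal to `n - 1` by `n`. -/
def sg (n x : ℕ) : ℕ := if x = n - 1 then n else x

/-- Replace every part equal to `n` by `n - 1`. -/
def tu (n x : ℕ) : ℕ := if x = n then n - 1 else x

/-- The forward map of the bijection. -/
def Fm (n : ℕ) (D : List (List ℕ)) : List (List ℕ) := D.map (List.map (sg n))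

/-- The inverse map of the bijection. -/
def Gm (n : ℕ) (D : List (List ℕ)) : List (List ℕ) := D.map (List.map (tu n))

lemma getD_map_map (f : ℕ → ℕ) (D : List (List ℕ)) (i : ℕ) :
    (D.map (List.map f)).getD i [] = (D.getD i []).map f := by
  rcases Nat.lt_or_ge i D.length with h | h
  · rw [List.getD_eq_getElem _ _ (by simpa using h), List.getD_eq_getElem _ _ h,
      List.getElem_map]
  · rw [List.getD_eq_default _ _ (by simpa using h), List.getD_eq_default _ _ h]
    rfl

lemma getD_map_zero (f : ℕ → ℕ) (h0 : f 0 = 0) (l : List ℕ) (k : ℕ) :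
    (l.map f).getD k 0 = f (l.getD k 0) := by
  rcases Nat.lt_or_ge k l.length with h | h
  · rw [List.getD_eq_getElem _ _ (by simpa using h), List.getD_eq_getElem _ _ h,
      List.getElem_map]
  · rw [List.getD_eq_default _ _ (by simpa using h), List.getD_eq_default _ _ h, h0]

lemma dppPart_map (f : ℕ → ℕ) (h0 : f 0 = 0) (D : List (List ℕ)) (i k : ℕ) :
    dppPart (D.map (List.map f)) i k = f (dppPart D i k) := by
  unfold dppPart
  rw [getD_map_map, getD_map_zero f h0]

lemma dppPart_mem {D : List (List ℕ)} {i k : ℕ} (h : dppPart D i k ≠ 0) :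
    i < D.length ∧ D.getD i [] ∈ D ∧ dppPart D i k ∈ D.getD i [] := by
  unfold dppPart at h ⊢
  have hi : i < D.length := by
    by_contra hi
    rw [List.getD_eq_default _ _ (le_of_not_gt hi)] at h
    simp at h
  have hk : k < (D.getD i []).length := by
    by_contra hk
    rw [List.getD_eq_default _ _ (le_of_not_gt hk)] at h
    simp at h
  refine ⟨hi, ?_, ?_⟩
  · rw [List.getD_eq_getElem _ _ hi]
    exact List.getElem_mem _
  · rw [List.getD_eq_getElem _ _ hk]
    exact List.getElem_mem _

lemma part_le {n : ℕ} {D : List (List ℕ)} (hD : IsDPP n D) (i k : ℕ) :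
    dppPart D i k ≤ n := by
  by_cases h : dppPart D i k = 0
  · omega
  · obtain ⟨_, hr, hm⟩ := dppPart_mem h
    exact ((hD.1 _ hr).2.2 _ hm).2

lemma part_ne {n : ℕ} {D : List (List ℕ)} (hD : IsDPP n D)
    (hA : ∀ r ∈ D, ∀ x ∈ r, x ≠ n) (i k : ℕ) (h : dppPart D i k ≠ 0) :
    dppPart D i k ≠ n := by
  obtain ⟨_, hr, hm⟩ := dppPart_mem h
  exact hA _ hr _ hm

/-- In an `IsDPP n` array, parts in rows below the first are less than `n`. -/
lemma lower_part_ne {n : ℕ} {D : List (List ℕ)} (hD : IsDPP n D) (hn : n ≠ 0)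
    (i k : ℕ) : dppPart D (i + 1) k ≠ n := by
  intro h
  have h0 : dppPart D (i + 1) k ≠ 0 := by omega
  have h1 := hD.2.1 i k h0
  have h2 := part_le hD i (k + 1)
  omega

lemma rowlen_lt {n : ℕ} {D : List (List ℕ)} (hD : IsDPP n D) {i : ℕ}
    (hi : i < D.length) : (D.getD i []).length < n :=
  lt_of_lt_of_le (hD.2.2.1 i hi) (part_le hD i 0)

lemma rowlen_lt_mem {n : ℕ} {D : List (List ℕ)} (hD : IsDPP n D) {r : List ℕ}
    (hr : r ∈ D) : r.length < n := by
  obtain ⟨i, hi, he⟩ := List.getElem_of_mem hr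
  have : D.getD i [] = r := by rw [List.getD_eq_getElem _ _ hi, he]
  rw [← this]
  exact rowlen_lt hD hi

lemma sg_zero {n : ℕ} (hn : 2 ≤ n) : sg n 0 = 0 := by
  unfold sg; split_ifs with h <;> omega

lemma tu_zero {n : ℕ} (hn : 2 ≤ n) : tu n 0 = 0 := by
  unfold tu; split_ifs with h <;> omega

lemma sg_ge {n : ℕ} (x : ℕ) : x ≤ sg n x := by
  unfold sg; split_ifs with h <;> omega

lemma tu_le {n : ℕ} (x : ℕ) : tu n x ≤ x := by
  unfold tu; split_ifs with h <;> omega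

lemma sg_mono {n : ℕ} {a b : ℕ} (h : b ≤ a) : sg n b ≤ sg n a := by
  unfold sg; split_ifs with h1 h2 <;> omega

lemma tu_mono {n : ℕ} {a b : ℕ} (h : b ≤ a) : tu n b ≤ tu n a := by
  unfold tu; split_ifs with h1 h2 <;> omega

/-- Main lemma: the forward map. -/
lemma main_fwd {n : ℕ} (hn : 2 ≤ n) {D : List (List ℕ)} (hD : IsDPP (n - 1) D) :
    IsDPP n (Fm n D) ∧ nuD (Fm n D) = nuD D ∧ muD (Fm n D) = muD D ∧
    rho1D n (Fm n D) = rho1D (n - 1) D ∧ rho2D n (Fm n D) = 0 ∧ Gm n (Fm n D) = D := by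
  have hs0 : sg n 0 = 0 := sg_zero hn
  have hpartmap : ∀ i k, dppPart (Fm n D) i k = sg n (dppPart D i k) :=
    fun i k => dppPart_map _ hs0 D i k
  have hlen : (Fm n D).length = D.length := List.length_map _
  have hrowlen : ∀ i, ((Fm n D).getD i []).length = (D.getD i []).length := by
    intro i
    unfold Fm
    rw [getD_map_map, List.length_map]
  -- lower rows have no part equal to n - 1
  have hlow : ∀ i k, dppPart D (i + 1) k ≠ n - 1 := by
    intro i k
    by_cases h0 : dppPart D (i + 1) k = 0
    · omega
    · exact lower_part_ne hD (by omega) i k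
  have hdpp : IsDPP n (Fm n D) := by
    refine ⟨?_, ?_, ?_, ?_⟩
    · intro r hr
      obtain ⟨r0, hr0, rfl⟩ := List.mem_map.1 hr
      obtain ⟨hne, hch, hb⟩ := hD.1 r0 hr0
      refine ⟨by simpa using hne, ?_, ?_⟩
      · unfold List.Chain' at hch ⊢; rw [List.isChain_map]
        exact hch.imp fun a b hab => sg_mono hab
      · intro a ha
        obtain ⟨a0, ha0, rfl⟩ := List.mem_map.1 ha
        have := hb a0 ha0
        unfold sg; split_ifs with h <;> omega
    · intro i k h
      rw [hpartmap] at h ⊢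
      rw [hpartmap]
      have h0 : dppPart D (i + 1) k ≠ 0 := by
        intro e; rw [e, hs0] at h; exact h rfl
      have h1 := hD.2.1 i k h0
      have h2 : sg n (dppPart D (i + 1) k) = dppPart D (i + 1) k :=
        if_neg (hlow i k)
      have h3 := sg_ge (n := n) (dppPart D i (k + 1))
      omega
    · intro i hi
      rw [hlen] at hi
      rw [hpartmap, hrowlen]
      have h1 := hD.2.2.1 i hi
      have h3 := sg_ge (n := n) (dppPart D i 0)
      omega
    · intro i
      rw [hpartmap, hrowlen]
      have h2 : sg n (dppPart D (i + 1) 0) = dppPart D (i + 1) 0 :=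
        if_neg (hlow i 0)
      rw [h2]
      exact hD.2.2.2 i
  -- row lengths are at most n - 2
  have hrl : ∀ i, i < D.length → (D.getD i []).length ≤ n - 2 := by
    intro i hi
    have := rowlen_lt hD hi
    omega
  refine ⟨hdpp, ?_, ?_, ?_, ?_, ?_⟩
  · -- nuD
    unfold nuD
    rw [hlen]
    refine Finset.sum_congr rfl fun i hi => ?_
    rw [hrowlen]
    congr 1
    refine Finset.filter_congr fun k hk => ?_
    rw [hpartmap]
    have hi' : i < D.length := Finset.mem_range.1 hi
    have hk' : k < (D.getD i []).length := Finset.mem_range.1 hk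
    have := hrl i hi'
    unfold sg; split_ifs with h <;> omega
  · -- muD
    unfold muD
    rw [hlen]
    refine Finset.sum_congr rfl fun i hi => ?_
    rw [hrowlen]
    congr 1
    refine Finset.filter_congr fun k hk => ?_
    rw [hpartmap]
    have hi' : i < D.length := Finset.mem_range.1 hi
    have hk' : k < (D.getD i []).length := Finset.mem_range.1 hk
    have := hrl i hi'
    unfold sg; split_ifs with h <;> omega
  · -- rho1D
    unfold rho1D Fm
    rw [List.map_map]
    congr 1
    refine List.map_congr_left fun r hr => ?_
    simp only [Function.comp_apply, List.count_eq_countP, List.countP_map]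
    refine List.countP_congr fun x hx => ?_
    have hb := ((hD.1 r hr).2.2 x hx).2
    simp only [Function.comp_apply, beq_iff_eq]
    unfold sg; split_ifs with h <;> omega
  · -- rho2D
    unfold rho2D
    rw [Nat.add_eq_zero]
    constructor
    · apply List.sum_eq_zero
      intro c hc
      obtain ⟨r, hr, rfl⟩ := List.mem_map.1 hc
      obtain ⟨r0, hr0, rfl⟩ := List.mem_map.1 hr
      rw [List.count_eq_countP, List.countP_map]
      apply List.countP_eq_zero.2
      intro x hx
      have hb := ((hD.1 r0 hr0).2.2 x hx).2
      simp only [Function.comp_apply, beq_iff_eq]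
      unfold sg; split_ifs with h <;> omega
    · rw [List.length_eq_zero_iff]
      apply List.filter_eq_nil_iff.2
      intro r hr
      obtain ⟨r0, hr0, rfl⟩ := List.mem_map.1 hr
      have := rowlen_lt_mem hD hr0
      simp only [List.length_map, decide_eq_true_eq]
      omega
  · -- Gm ∘ Fm = id
    unfold Fm Gm
    rw [List.map_map]
    have : ∀ r ∈ D, (List.map (tu n) ∘ List.map (sg n)) r = id r := by
      intro r hr
      simp only [Function.comp_apply, List.map_map, id]
      have : ∀ x ∈ r, (tu n ∘ sg n) x = id x := by
        intro x hx
        have hb := ((hD.1 r hr).2.2 x hx).2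
        simp only [Function.comp_apply, id]
        unfold sg tu; split_ifs with h1 h2 <;> omega
      rw [List.map_congr_left this, List.map_id]
    rw [List.map_congr_left this, List.map_id]

/-- Main lemma: the inverse map. -/
lemma main_inv {n : ℕ} (hn : 2 ≤ n) {D : List (List ℕ)} (hD : IsDPP n D)
    (h2 : rho2D n D = 0) : IsDPP (n - 1) (Gm n D) ∧ Fm n (Gm n D) = D := by
  have ht0 : tu n 0 = 0 := tu_zero hn
  have hpartmap : ∀ i k, dppPart (Gm n D) i k = tu n (dppPart D i k) :=
    fun i k => dppPart_map _ ht0 D i k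
  have hlen : (Gm n D).length = D.length := List.length_map _
  have hrowlen : ∀ i, ((Gm n D).getD i []).length = (D.getD i []).length := by
    intro i
    unfold Gm
    rw [getD_map_map, List.length_map]
  unfold rho2D at h2
  rw [Nat.add_eq_zero] at h2
  -- no part equal to n - 1
  have hA : ∀ r ∈ D, ∀ x ∈ r, x ≠ n - 1 := by
    intro r hr x hx
    have := List.sum_eq_zero_iff.1 h2.1 (r.count (n - 1)) (List.mem_map_of_mem hr)
    intro e
    rw [← e, List.count_eq_zero] at this
    exact this hx
  -- no row of length n - 1
  have hB : ∀ r ∈ D, r.length ≠ n - 1 := by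
    intro r hr
    have := List.filter_eq_nil_iff.1 (List.length_eq_zero_iff.1 h2.2) r hr
    simpa using this
  have hApart : ∀ i k, dppPart D i k ≠ n - 1 := by
    intro i k
    by_cases h0 : dppPart D i k = 0
    · omega
    · obtain ⟨_, hr, hm⟩ := dppPart_mem h0
      exact hA _ hr _ hm
  have hlow : ∀ i k, dppPart D (i + 1) k ≠ n := lower_part_ne hD (by omega)
  have hrl : ∀ i, i < D.length → (D.getD i []).length ≤ n - 2 := by
    intro i hi
    have h1 := rowlen_lt hD hi
    have hmem : D.getD i [] ∈ D := by
      rw [List.getD_eq_getElem _ _ hi]; exact List.getElem_mem _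
    have h3 := hB _ hmem
    omega
  constructor
  · refine ⟨?_, ?_, ?_, ?_⟩
    · intro r hr
      obtain ⟨r0, hr0, rfl⟩ := List.mem_map.1 hr
      obtain ⟨hne, hch, hb⟩ := hD.1 r0 hr0
      refine ⟨by simpa using hne, ?_, ?_⟩
      · unfold List.Chain' at hch ⊢; rw [List.isChain_map]
        exact hch.imp fun a b hab => tu_mono hab
      · intro a ha
        obtain ⟨a0, ha0, rfl⟩ := List.mem_map.1 ha
        have := hb a0 ha0
        unfold tu; split_ifs with h <;> omega
    · intro i k h
      rw [hpartmap] at h ⊢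
      rw [hpartmap]
      have h0 : dppPart D (i + 1) k ≠ 0 := by
        intro e; rw [e, ht0] at h; exact h rfl
      have h1 := hD.2.1 i k h0
      have h4 := hApart (i + 1) k
      have h5 := hApart i (k + 1)
      have h6 := hlow i k
      have h7 := part_le hD i (k + 1)
      unfold tu; split_ifs with ha hb <;> omega
    · intro i hi
      rw [hlen] at hi
      rw [hpartmap, hrowlen]
      have h1 := hD.2.2.1 i hi
      have h3 := hrl i hi
      unfold tu; split_ifs with h <;> omega
    · intro i
      rw [hpartmap, hrowlen]
      have h2' := hD.2.2.2 i
      have h6 := hlow i 0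
      unfold tu; split_ifs with h <;> omega
  · unfold Fm Gm
    rw [List.map_map]
    have : ∀ r ∈ D, (List.map (sg n) ∘ List.map (tu n)) r = id r := by
      intro r hr
      simp only [Function.comp_apply, List.map_map, id]
      have : ∀ x ∈ r, (sg n ∘ tu n) x = id x := by
        intro x hx
        have hb := ((hD.1 r hr).2.2 x hx).2
        have hne := hA r hr x hx
        simp only [Function.comp_apply, id]
        unfold sg tu; split_ifs with h1 h2 <;> omega
      rw [List.map_congr_left this, List.map_id]
    rw [List.map_congr_left this, List.map_id]

/-- The DPPs with each part at most `n - 1` and `ν = p`, `μ = m`, `ρ₁ = k` are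
equinumerous with the DPPs with each part at most `n` and `ν = p`, `μ = m`, `ρ₁ = k`,
`ρ₂ = 0`; consequently `Z^DPP_n(x,y,z,0) = Z^DPP_{n-1}(x,y,z,1)`. -/
theorem DPP_z2_zero (n : ℕ) (hn : 2 ≤ n) :
    (∀ p m k : ℤ,
      {D ∈ DPPs (n - 1) | (nuD D : ℤ) = p ∧ (muD D : ℤ) = m ∧
        (rho1D (n - 1) D : ℤ) = k}.ncard =
      {D ∈ DPPs n | (nuD D : ℤ) = p ∧ (muD D : ℤ) = m ∧ (rho1D n D : ℤ) = k ∧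
        rho2D n D = 0}.ncard) ∧
    (∀ (R : Type) (_ : CommRing R) (x y z : R),
      ZDPP2 n x y z 0 = ZDPP2 (n - 1) x y z 1) := by
  -- the unrefined bijection
  have hbij0 : Set.BijOn (Fm n) (DPPs (n - 1)) {D | IsDPP n D ∧ rho2D n D = 0} := by
    refine ⟨?_, ?_, ?_⟩
    · intro D hD
      obtain ⟨h1, _, _, _, h5, _⟩ := main_fwd hn hD
      exact ⟨h1, h5⟩
    · intro D1 hD1 D2 hD2 he
      have e1 := (main_fwd hn hD1).2.2.2.2.2
      have e2 := (main_fwd hn hD2).2.2.2.2.2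
      rw [← e1, ← e2, he]
    · intro D' hD'
      obtain ⟨hd1, hd2⟩ := main_inv hn hD'.1 hD'.2
      exact ⟨Gm n D', hd1, hd2⟩
  have hstat : ∀ D ∈ DPPs (n - 1), nuD (Fm n D) = nuD D ∧ muD (Fm n D) = muD D ∧
      rho1D n (Fm n D) = rho1D (n - 1) D ∧ rho2D n (Fm n D) = 0 := by
    intro D hD
    obtain ⟨_, h2, h3, h4, h5, _⟩ := main_fwd hn hD
    exact ⟨h2, h3, h4, h5⟩
  constructor
  · intro p m k
    have hbij : Set.BijOn (Fm n)
        {D ∈ DPPs (n - 1) | (nuD D : ℤ) = p ∧ (muD D : ℤ) = m ∧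
          (rho1D (n - 1) D : ℤ) = k}
        {D ∈ DPPs n | (nuD D : ℤ) = p ∧ (muD D : ℤ) = m ∧ (rho1D n D : ℤ) = k ∧
          rho2D n D = 0} := by
      refine ⟨?_, ?_, ?_⟩
      · rintro D ⟨hD, h1, h2, h3⟩
        obtain ⟨s1, s2, s3, s4⟩ := hstat D hD
        exact ⟨(hbij0.1 hD).1, by rw [s1]; exact h1, by rw [s2]; exact h2,
          by rw [s3]; exact h3, s4⟩
      · intro D1 hD1 D2 hD2 he
        exact hbij0.2.1 hD1.1 hD2.1 he
      · rintro D' ⟨hD', h1, h2, h3, h4⟩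
        obtain ⟨hd1, hd2⟩ := main_inv hn hD' h4
        obtain ⟨s1, s2, s3, s4⟩ := hstat (Gm n D') hd1
        rw [hd2] at s1 s2 s3
        refine ⟨Gm n D', ⟨hd1, ?_, ?_, ?_⟩, hd2⟩
        · rw [← s1] at *; exact h1
        · rw [← s2] at *; exact h2
        · rw [← s3] at *; exact h3
    rw [← hbij.image_eq]
    exact (Set.ncard_image_of_injOn hbij.injOn).symm
  · intro R _ x y z
    unfold ZDPP2
    have step1 : ∑ᶠ D ∈ DPPs n, x ^ nuD D * y ^ muD D * z ^ rho1D n D *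
        (0 : R) ^ rho2D n D =
        ∑ᶠ D ∈ {D | IsDPP n D ∧ rho2D n D = 0}, x ^ nuD D * y ^ muD D *
        z ^ rho1D n D * (0 : R) ^ rho2D n D := by
      apply finsum_mem_inter_support_eq
      ext D
      simp only [Set.mem_inter_iff, Function.mem_support, Set.mem_setOf_eq]
      constructor
      · rintro ⟨hD, hne⟩
        refine ⟨⟨hD, ?_⟩, hne⟩
        by_contra h0
        apply hne
        rw [zero_pow h0, mul_zero]
      · rintro ⟨⟨hD, _⟩, hne⟩
        exact ⟨hD, hne⟩
    rw [step1]
    symm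
    apply finsum_mem_eq_of_bijOn (Fm n) hbij0
    intro D hD
    obtain ⟨s1, s2, s3, s4⟩ := hstat D hD
    rw [s1, s2, s3, s4]
    simp

end ASMDPP
end

section
/- For every integer n ≥ 1 and all elements x, y, z₁, z₂ of a commutative ring, the doubly-refined ASM generating function is symmetric in its last two arguments: Z^ASM_n(x,y,z₁,z₂) = Z^ASM_n(x,y,z₂,z₁). Equivalently, for all integers p, m, k₁, k₂, the number of n×n alternating sign matrices A with ν(A) = p, μ(A) = m, ρ₁(A) = k₁, ρ₂(A) = k₂ equals the number with ν(A) = p, μ(A) = m, ρ₁(A) = k₂, ρ₂(A) = k₁. -/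
namespace ASMDPP

/-! ### Auxiliary material: 180° rotation of a matrix -/

/-- Rotation of a matrix by 180 degrees. -/
def rotM {n : ℕ} (A : Matrix (Fin n) (Fin n) ℤ) : Matrix (Fin n) (Fin n) ℤ :=
  fun i j => A i.rev j.rev

lemma rotM_involutive {n : ℕ} : Function.Involutive (rotM (n := n)) := by
  intro A; funext i j; simp [rotM, Fin.rev_rev]

lemma sum_Iio_mem {n : ℕ} (f : Fin n → ℤ)
    (hIic : ∀ j, (∑ j' ∈ Finset.Iic j, f j') = 0 ∨ (∑ j' ∈ Finset.Iic j, f j') = 1)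
    (k : Fin n) : (∑ j' ∈ Finset.Iio k, f j') = 0 ∨ (∑ j' ∈ Finset.Iio k, f j') = 1 := by
  rcases Nat.eq_zero_or_pos (k : ℕ) with h | h
  · left
    have he : Finset.Iio k = ∅ := by
      ext j
      simp only [Finset.mem_Iio, Finset.notMem_empty, iff_false, not_lt, Fin.le_def, h]
      exact Nat.zero_le _
    simp [he]
  · have hk' : (k : ℕ) - 1 < n := (Nat.sub_lt h Nat.one_pos).trans k.isLt
    have he : Finset.Iio k = Finset.Iic ⟨(k : ℕ) - 1, hk'⟩ := by
      ext j
      simp only [Finset.mem_Iio, Finset.mem_Iic, Fin.lt_def, Fin.le_def]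
      omega
    rw [he]
    exact hIic _

lemma sum_Iic_rev {n : ℕ} (f : Fin n → ℤ) (j : Fin n) :
    ∑ j' ∈ Finset.Iic j, f j'.rev = ∑ j' ∈ Finset.Ici j.rev, f j' := by
  refine Finset.sum_nbij' Fin.rev Fin.rev ?_ ?_ ?_ ?_ ?_
  · intro a ha
    simp only [Finset.mem_Iic] at ha
    simpa [Finset.mem_Ici, Fin.rev_le_rev] using ha
  · intro a ha
    simp only [Finset.mem_Ici] at ha
    simp only [Finset.mem_Iic]
    rw [← Fin.rev_le_rev, Fin.rev_rev]
    exact ha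
  · intro a _; exact Fin.rev_rev a
  · intro a _; exact Fin.rev_rev a
  · intro a _; rfl

lemma compl_Iio' {n : ℕ} (a : Fin n) : (Finset.Iio a)ᶜ = Finset.Ici a := by
  ext x; simp [not_lt]

lemma rot_partial {n : ℕ} (f : Fin n → ℤ) (hsum : ∑ j, f j = 1)
    (hIic : ∀ j, (∑ j' ∈ Finset.Iic j, f j') = 0 ∨ (∑ j' ∈ Finset.Iic j, f j') = 1)
    (j : Fin n) :
    (∑ j' ∈ Finset.Iic j, f j'.rev) = 0 ∨ (∑ j' ∈ Finset.Iic j, f j'.rev) = 1 := by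
  rw [sum_Iic_rev]
  have h2 : ∑ j' ∈ Finset.Ici j.rev, f j' + ∑ j' ∈ Finset.Iio j.rev, f j' = 1 := by
    rw [← compl_Iio', Finset.sum_compl_add_sum, hsum]
  rcases sum_Iio_mem f hIic j.rev with h | h <;> omega

lemma isASM_rotM {n : ℕ} {A : Matrix (Fin n) (Fin n) ℤ} (hA : IsASM A) : IsASM (rotM A) := by
  obtain ⟨h1, h2, h3, h4, h5⟩ := hA
  refine ⟨fun i j => h1 _ _, ?_, ?_, ?_, ?_⟩
  · intro i j
    exact rot_partial (fun j' => A i.rev j') (h4 i.rev) (h2 i.rev) j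
  · intro i j
    exact rot_partial (fun i' => A i' j.rev) (h5 j.rev) (fun k => h3 k j.rev) i
  · intro i
    rw [Fintype.sum_bijective Fin.rev Fin.rev_involutive.bijective
      (fun j => rotM A i j) (fun j => A i.rev j) (fun j => rfl)]
    exact h4 i.rev
  · intro j
    rw [Fintype.sum_bijective Fin.rev Fin.rev_involutive.bijective
      (fun i => rotM A i j) (fun i => A i j.rev) (fun i => rfl)]
    exact h5 j.rev

lemma nuA_rotM {n : ℕ} (A : Matrix (Fin n) (Fin n) ℤ) : nuA (rotM A) = nuA A := by
  unfold nuA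
  refine (Finset.sum_nbij'
    (fun p => ((p.2.1.rev, p.2.2.rev), (p.1.1.rev, p.1.2.rev)))
    (fun p => ((p.2.1.rev, p.2.2.rev), (p.1.1.rev, p.1.2.rev)))
    ?_ ?_ ?_ ?_ ?_).symm
  · intro p hp
    simp only [Finset.mem_filter, Finset.mem_univ, true_and] at hp ⊢
    exact ⟨by simpa [Fin.rev_lt_rev] using hp.1, by simpa [Fin.rev_le_rev] using hp.2⟩
  · intro p hp
    simp only [Finset.mem_filter, Finset.mem_univ, true_and] at hp ⊢
    exact ⟨by simpa [Fin.rev_lt_rev] using hp.1, by simpa [Fin.rev_le_rev] using hp.2⟩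
  · intro p _; simp [Fin.rev_rev]
  · intro p _; simp [Fin.rev_rev]
  · intro p _
    simp only [rotM, Fin.rev_rev]
    ring

lemma muA_rotM {n : ℕ} (A : Matrix (Fin n) (Fin n) ℤ) : muA (rotM A) = muA A := by
  unfold muA
  refine Finset.card_bij' (fun p _ => (p.1.rev, p.2.rev)) (fun p _ => (p.1.rev, p.2.rev))
    ?_ ?_ ?_ ?_
  · intro p hp
    simp only [Finset.mem_filter, Finset.mem_univ, true_and] at hp ⊢
    exact hp
  · intro p hp
    simp only [Finset.mem_filter, Finset.mem_univ, true_and] at hp ⊢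
    simp only [rotM, Fin.rev_rev] at hp ⊢
    exact hp
  · intro p _; simp [Fin.rev_rev]
  · intro p _; simp [Fin.rev_rev]

lemma rho1A_rotM {m : ℕ} (A : Matrix (Fin (m+1)) (Fin (m+1)) ℤ) :
    rho1A (rotM A) = rho2A A := by
  unfold rho1A rho2A
  refine Finset.card_bij' (fun p _ => (p.1.rev, p.2.rev)) (fun p _ => (p.1.rev, p.2.rev))
    ?_ ?_ ?_ ?_
  · intro p hp
    simp only [Finset.mem_filter, Finset.mem_univ, true_and] at hp ⊢
    simp only [rotM] at hp ⊢
    obtain ⟨hp1, hp2, j', hj1, hj2⟩ := hp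
    refine ⟨by simp [Fin.val_rev, hp1], hp2, j'.rev, ?_, ?_⟩
    · rw [Fin.rev_lt_rev]; exact hj1
    · exact hj2
  · intro p hp
    simp only [Finset.mem_filter, Finset.mem_univ, true_and] at hp ⊢
    simp only [rotM, Fin.rev_rev] at hp ⊢
    obtain ⟨hp1, hp2, j', hj1, hj2⟩ := hp
    refine ⟨by simp [Fin.val_rev]; omega, hp2, j'.rev, ?_, by simpa [Fin.rev_rev] using hj2⟩
    rw [← Fin.rev_rev p.2] at hj1
    rw [← Fin.rev_lt_rev, Fin.rev_rev]
    exact hj1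
  · intro p _; simp [Fin.rev_rev]
  · intro p _; simp [Fin.rev_rev]

lemma rho2A_rotM {m : ℕ} (A : Matrix (Fin (m+1)) (Fin (m+1)) ℤ) :
    rho2A (rotM A) = rho1A A := by
  have := rho1A_rotM (rotM A)
  rw [rotM_involutive A] at this
  omega

lemma rotM_bijOn {n : ℕ} : Set.BijOn (rotM (n := n)) (ASMs n) (ASMs n) := by
  have hmaps : Set.MapsTo (rotM (n := n)) (ASMs n) (ASMs n) := fun A hA => isASM_rotM hA
  exact Set.InvOn.bijOn ⟨fun A _ => rotM_involutive A, fun A _ => rotM_involutive A⟩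
    hmaps hmaps

/-- The doubly-refined ASM generating function is symmetric in `z₁` and `z₂`;
equivalently, the joint distribution of `(ν, μ, ρ₁, ρ₂)` on `ASM(n)` is symmetric
under exchanging the values of `ρ₁` and `ρ₂`. -/
theorem ZASM2_symm {R : Type*} [CommRing R] (n : ℕ) (hn : 1 ≤ n) :
    (∀ x y z₁ z₂ : R, ZASM2 n x y z₁ z₂ = ZASM2 n x y z₂ z₁) ∧
    (∀ p m k₁ k₂ : ℤ,
      {A ∈ ASMs n | nuA A = p ∧ (muA A : ℤ) = m ∧ (rho1A A : ℤ) = k₁ ∧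
        (rho2A A : ℤ) = k₂}.ncard =
      {A ∈ ASMs n | nuA A = p ∧ (muA A : ℤ) = m ∧ (rho1A A : ℤ) = k₂ ∧
        (rho2A A : ℤ) = k₁}.ncard) := by
  obtain ⟨m, rfl⟩ : ∃ m, n = m + 1 := ⟨n - 1, (Nat.succ_pred_eq_of_pos hn).symm⟩
  constructor
  · intro x y z₁ z₂
    unfold ZASM2
    refine finsum_mem_eq_of_bijOn rotM rotM_bijOn ?_
    intro A _
    rw [nuA_rotM, muA_rotM, rho1A_rotM, rho2A_rotM]
    ring
  · intro p q k₁ k₂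
    have himg :
        {A ∈ ASMs (m+1) | nuA A = p ∧ (muA A : ℤ) = q ∧ (rho1A A : ℤ) = k₂ ∧
          (rho2A A : ℤ) = k₁} =
        rotM '' {A ∈ ASMs (m+1) | nuA A = p ∧ (muA A : ℤ) = q ∧ (rho1A A : ℤ) = k₁ ∧
          (rho2A A : ℤ) = k₂} := by
      ext B
      constructor
      · rintro ⟨hB, h1, h2, h3, h4⟩
        refine ⟨rotM B, ⟨isASM_rotM hB, ?_, ?_, ?_, ?_⟩, rotM_involutive B⟩
        · rw [nuA_rotM]; exact h1
        · rw [muA_rotM]; exact h2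
        · rw [rho1A_rotM]; exact h4
        · rw [rho2A_rotM]; exact h3
      · rintro ⟨A, ⟨hA, h1, h2, h3, h4⟩, rfl⟩
        refine ⟨isASM_rotM hA, ?_, ?_, ?_, ?_⟩
        · rw [nuA_rotM]; exact h1
        · rw [muA_rotM]; exact h2
        · rw [rho1A_rotM]; exact h4
        · rw [rho2A_rotM]; exact h3
    rw [himg, Set.ncard_image_of_injective _ rotM_involutive.injective]


end ASMDPP
end

section
/- For every integer n ≥ 1 and all elements x, y, z₁, z₂ of a commutative ring, the doubly-refined DPP generating function is symmetric in its last two arguments: Z^DPP_n(x,y,z₁,z₂) = Z^DPP_n(x,y,z₂,z₁). Equivalently, for all integers p, m, k₁, k₂, the number of descending plane partitions D with each part at most n satisfying ν(D) = p, μ(D) = m, ρ₁(D) = k₁, ρ₂(D) = k₂ equals the number with ν(D) = p, μ(D) = m, ρ₁(D) = k₂, ρ₂(D) = k₁. -/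
namespace ASMDPP

lemma getD_drop (l : List ℕ) (m k : ℕ) : (l.drop m).getD k 0 = l.getD (m + k) 0 := by
  simp [List.getD, List.getElem?_drop]

lemma mem_le_getD_zero {l : List ℕ} (h : l.Chain' (· ≥ ·)) {x : ℕ} (hx : x ∈ l) :
    x ≤ l.getD 0 0 := by
  simp only [List.Chain', List.isChain_iff_pairwise] at h
  cases l with
  | nil => simp at hx
  | cons a t =>
    rcases List.mem_cons.mp hx with rfl | hx
    · simp
    · simpa using (List.pairwise_cons.mp h).1 x hx

lemma getD_ge_iff {l : List ℕ} (h : l.Chain' (· ≥ ·)) {v : ℕ} (hv : 1 ≤ v) (k : ℕ) :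
    v ≤ l.getD k 0 ↔ k < l.countP (fun x => v ≤ x) := by
  induction l generalizing k with
  | nil => simp [List.getD]; omega
  | cons a t ih =>
    have ht : t.Chain' (· ≥ ·) := h.tail
    have hzero : ¬ v ≤ a → t.countP (fun x => v ≤ x) = 0 := by
      intro hva
      rw [List.countP_eq_zero]
      intro x hx
      have hxa : x ≤ a := by
        simpa using mem_le_getD_zero h (List.mem_cons_of_mem a hx)
      simp only [decide_eq_true_eq]
      omega
    cases k with
    | zero =>
      simp only [List.getD_cons_zero, List.countP_cons]
      by_cases hva : v ≤ a
      · simp [hva]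
      · simp [hva, hzero hva]
    | succ k =>
      rw [List.getD_cons_succ, ih ht, List.countP_cons]
      by_cases hva : v ≤ a
      · simp [hva]
      · simp [hva, hzero hva]

lemma countP_ge_top {n : ℕ} {l : List ℕ} (hl : ∀ x ∈ l, x ≤ n) :
    l.countP (fun x => n ≤ x) = l.count n := by
  induction l with
  | nil => simp
  | cons a t ih =>
    have ha : a ≤ n := hl a (by simp)
    have := ih (fun x hx => hl x (by simp [hx]))
    rw [List.countP_cons, List.count_cons, this]
    by_cases h : a = n
    · simp [h]
    · have : ¬ n ≤ a := by omega
      simp [h, this]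

lemma countP_ge_sub1 {n : ℕ} (hn : 2 ≤ n) {l : List ℕ} (hl : ∀ x ∈ l, x ≤ n) :
    l.countP (fun x => n - 1 ≤ x) = l.count n + l.count (n - 1) := by
  induction l with
  | nil => simp
  | cons a t ih =>
    have ha : a ≤ n := hl a (by simp)
    have := ih (fun x hx => hl x (by simp [hx]))
    rw [List.countP_cons, List.count_cons, List.count_cons, this]
    have hne : ¬ (n = n - 1) := by omega
    have hne' : ¬ (n - 1 = n) := by omega
    by_cases h1 : a = n
    · have : n - 1 ≤ a := by omega
      have h2 : ¬ (a = n - 1) := by omega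
      simp [h1, h2, this, hne, hne']; omega
    · by_cases h2 : a = n - 1
      · have : n - 1 ≤ a := by omega
        simp [h1, h2, this, hne, hne']; omega
      · have : ¬ (n - 1 ≤ a) := by omega
        simp [h1, h2, this]

lemma ext_getD {l₁ l₂ : List ℕ} (hlen : l₁.length = l₂.length)
    (h : ∀ k, l₁.getD k 0 = l₂.getD k 0) : l₁ = l₂ := by
  apply List.ext_getElem hlen
  intro k h1 h2
  have := h k
  rwa [List.getD_eq_getElem _ _ h1, List.getD_eq_getElem _ _ h2] at this

lemma chain'_replicate_append {v : ℕ} {l : List ℕ} (hl : l.Chain' (· ≥ ·))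
    (hb : ∀ x ∈ l, x ≤ v) (m : ℕ) : (List.replicate m v ++ l).Chain' (· ≥ ·) := by
  induction m with
  | zero => simpa
  | succ m ih =>
    rw [List.replicate_succ, List.cons_append]; simp only [List.Chain', List.isChain_cons]
    refine ⟨?_, ih⟩
    intro y hy
    have hym : y ∈ List.replicate m v ++ l := List.mem_of_mem_head? hy
    rcases List.mem_append.mp hym with h | h
    · exact le_of_eq (List.eq_of_mem_replicate h)
    · exact hb y h

lemma getD_rep_rep_app (p q v w : ℕ) (s : List ℕ) (k : ℕ) :
    (List.replicate p v ++ List.replicate q w ++ s).getD k 0 =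
      if k < p then v else if k < p + q then w else s.getD (k - (p + q)) 0 := by
  rw [List.append_assoc]
  by_cases h1 : k < p
  · rw [List.getD_append _ _ _ _ (by simpa using h1)]
    simp [List.getD, List.getElem?_replicate, h1]
  · rw [List.getD_append_right _ _ _ _ (by simpa using h1), List.length_replicate]
    by_cases h2 : k < p + q
    · rw [List.getD_append _ _ _ _ (by simp; omega)]
      simp only [List.getD, List.getElem?_replicate]
      have : k - p < q := by omega
      simp [h1, h2, this]
    · rw [List.getD_append_right _ _ _ _ (by simp; omega), List.length_replicate]
      have : k - p - q = k - (p + q) := by omega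
      simp [h1, h2, this]

lemma getD_mem {α : Type*} {l : List α} {k : ℕ} (h : k < l.length) (d : α) : l.getD k d ∈ l := by
  rw [List.getD_eq_getElem _ _ h]
  exact List.getElem_mem h

lemma first_entry_bound {n : ℕ} {D : List (List ℕ)} (hD : IsDPP n D) :
    ∀ i < D.length, dppPart D i 0 + i ≤ n := by
  intro i
  induction i with
  | zero =>
    intro h0
    have hrow := hD.1 (D.getD 0 []) (getD_mem h0 [])
    have hpos : 0 < (D.getD 0 []).length := List.length_pos_iff.mpr hrow.1
    have hmem : (D.getD 0 []).getD 0 0 ∈ D.getD 0 [] := getD_mem hpos 0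
    simpa [dppPart] using (hrow.2.2 _ hmem).2
  | succ i ih =>
    intro hi
    have hi' : i < D.length := by omega
    have h1 := hD.2.2.2 i
    have h2 := hD.2.2.1 i hi'
    have h3 := ih hi'
    simp only [dppPart] at *
    omega

lemma entry_bound {n : ℕ} {D : List (List ℕ)} (hD : IsDPP n D) :
    ∀ i < D.length, ∀ x ∈ D.getD i [], x + i ≤ n := by
  intro i hi x hx
  have hrow := hD.1 (D.getD i []) (getD_mem hi [])
  have := mem_le_getD_zero hrow.2.1 hx
  have := first_entry_bound hD i hi
  simp only [dppPart] at *
  omega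

lemma length_bound {n : ℕ} {D : List (List ℕ)} (hD : IsDPP n D) :
    ∀ i < D.length, (D.getD i []).length + i + 1 ≤ n := by
  intro i hi
  have h2 := hD.2.2.1 i hi
  have := first_entry_bound hD i hi
  omega

lemma nuD_cons (r : List ℕ) (rs : List (List ℕ)) :
    nuD (r :: rs) =
      ((Finset.range r.length).filter (fun k => k < r.getD k 0)).card + nuD rs := by
  unfold nuD
  rw [List.length_cons, Finset.sum_range_succ']
  rw [add_comm]
  congr 1

lemma muD_cons (r : List ℕ) (rs : List (List ℕ)) :
    muD (r :: rs) =
      ((Finset.range r.length).filter (fun k => r.getD k 0 ≤ k)).card + muD rs := by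
  unfold muD
  rw [List.length_cons, Finset.sum_range_succ']
  rw [add_comm]
  congr 1

lemma rho1D_cons (n : ℕ) (r : List ℕ) (rs : List (List ℕ)) :
    rho1D n (r :: rs) = r.count n + rho1D n rs := by
  simp [rho1D]

lemma rho2D_cons (n : ℕ) (r : List ℕ) (rs : List (List ℕ)) :
    rho2D n (r :: rs) =
      (r.count (n - 1) + (if r.length = n - 1 then 1 else 0)) + rho2D n rs := by
  by_cases h : r.length = n - 1 <;>
    simp [rho2D, List.filter_cons, h] <;> omega

/-- The involution on DPPs: rewrites the prefix of `n`s and `(n-1)`s of the first row,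
exchanging `ρ₁` and `ρ₂`. -/
def dswap (n : ℕ) (D : List (List ℕ)) : List (List ℕ) :=
  match D with
  | [] => []
  | r :: rs =>
    (List.replicate ((if r.length = n - 1 then 1 else 0) + r.count (n - 1)
        + (rs.getD 0 []).count (n - 1)) n ++
      List.replicate (r.count n - (if r.length = n - 1 then 1 else 0)
        - (rs.getD 0 []).count (n - 1)) (n - 1) ++
      r.drop (r.count n + r.count (n - 1))) :: rs

lemma dswap_cons (n : ℕ) (r : List ℕ) (rs : List (List ℕ)) :
    dswap n (r :: rs) =
      (List.replicate ((if r.length = n - 1 then 1 else 0) + r.count (n - 1)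
          + (rs.getD 0 []).count (n - 1)) n ++
        List.replicate (r.count n - (if r.length = n - 1 then 1 else 0)
          - (rs.getD 0 []).count (n - 1)) (n - 1) ++
        r.drop (r.count n + r.count (n - 1))) :: rs := rfl

lemma dswap_props {n : ℕ} {D : List (List ℕ)} (hD : IsDPP n D) :
    IsDPP n (dswap n D) ∧ dswap n (dswap n D) = D ∧
      nuD (dswap n D) = nuD D ∧ muD (dswap n D) = muD D ∧
      rho1D n (dswap n D) = rho2D n D ∧ rho2D n (dswap n D) = rho1D n D := by
  cases D with
  | nil => exact ⟨hD, rfl, rfl, rfl, by simp [dswap, rho1D, rho2D], by simp [dswap, rho1D, rho2D]⟩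
  | cons r rs =>
    set a := r.count n with ha_def
    set b := r.count (n - 1) with hb_def
    set c := (rs.getD 0 []).count (n - 1) with hc_def
    set t := (if r.length = n - 1 then 1 else 0) with ht_def
    set s := r.drop (a + b) with hs_def
    set r' := List.replicate (t + b + c) n ++ List.replicate (a - t - c) (n - 1) ++ s
      with hr'_def
    have hswap : dswap n (r :: rs) = r' :: rs := rfl
    -- basic facts about the first row
    have hr0 := hD.1 r (List.mem_cons_self)
    have hr_ne : r ≠ [] := hr0.1
    have hr_ch : r.Chain' (· ≥ ·) := hr0.2.1
    have hr_bd : ∀ x ∈ r, 1 ≤ x ∧ x ≤ n := hr0.2.2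
    have hlen_pos : 0 < r.length := List.length_pos_iff.mpr hr_ne
    have hfirst : r.length < r.getD 0 0 := by simpa [dppPart] using hD.2.2.1 0 (by simp)
    have hfirst_le : r.getD 0 0 ≤ n := (hr_bd _ (getD_mem hlen_pos 0)).2
    have hn2 : 2 ≤ n := by omega
    have hlen_le : r.length ≤ n - 1 := by omega
    -- facts about the second row
    have hrow2_ch : (rs.getD 0 []).Chain' (· ≥ ·) := by
      cases rs with
      | nil => exact List.isChain_nil
      | cons r2 rs2 => exact (hD.1 r2 (by simp)).2.1
    have hrow2_le : ∀ x ∈ rs.getD 0 [], x ≤ n - 1 := by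
      cases rs with
      | nil => simp
      | cons r2 rs2 =>
        intro x hx
        have := entry_bound hD 1 (by simp) x (by simpa using hx)
        omega
    have hdom0 : (rs.getD 0 []).getD 0 0 ≤ r.length := by
      simpa [dppPart] using hD.2.2.2 0
    have hrow2_getD_le : ∀ k, (rs.getD 0 []).getD k 0 ≤ n - 1 := by
      intro k
      by_cases hk : k < (rs.getD 0 []).length
      · exact hrow2_le _ (getD_mem hk 0)
      · rw [List.getD_eq_default _ _ (le_of_not_gt hk)]; omega
    -- count characterizations
    have ha_char : ∀ k, n ≤ r.getD k 0 ↔ k < a := by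
      intro k
      rw [getD_ge_iff hr_ch (by omega) k, countP_ge_top (fun x hx => (hr_bd x hx).2)]
    have hab_char : ∀ k, n - 1 ≤ r.getD k 0 ↔ k < a + b := by
      intro k
      rw [getD_ge_iff hr_ch (by omega) k, countP_ge_sub1 hn2 (fun x hx => (hr_bd x hx).2)]
    have hrow2_count_n : (rs.getD 0 []).count n = 0 := by
      rw [List.count_eq_zero]
      intro hmem
      have := hrow2_le n hmem; omega
    have hc_char : ∀ k, n - 1 ≤ (rs.getD 0 []).getD k 0 ↔ k < c := by
      intro k
      rw [getD_ge_iff hrow2_ch (by omega) k,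
        countP_ge_sub1 hn2 (fun x hx => le_trans (hrow2_le x hx) (by omega)),
        hrow2_count_n, zero_add]
    have hab_le : a + b ≤ r.length := by
      rw [ha_def, hb_def, ← countP_ge_sub1 hn2 (fun x hx => (hr_bd x hx).2)]
      exact List.countP_le_length
    -- facts about t and c
    have ht_le : t ≤ 1 := by rw [ht_def]; split <;> omega
    have ht_a : t = 1 → 1 ≤ a := by
      intro h1
      have hlen_eq : r.length = n - 1 := by
        by_contra hne
        rw [ht_def, if_neg hne] at h1; omega
      exact (ha_char 0).mp (by omega)
    have hc_t : 1 ≤ c → t = 1 := by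
      intro hc
      have h1 : n - 1 ≤ (rs.getD 0 []).getD 0 0 := (hc_char 0).mpr (by omega)
      have h2 : r.length = n - 1 := by omega
      rw [ht_def, if_pos h2]
    have ha_tc : t + c ≤ a := by
      rcases Nat.eq_zero_or_pos c with h0 | hc
      · rcases Nat.eq_zero_or_pos t with h1 | h1
        · omega
        · have := ht_a (by omega); omega
      · have ht1 := hc_t hc
        have hvk : (rs.getD 0 []).getD (c - 1) 0 = n - 1 :=
          le_antisymm (hrow2_getD_le _) ((hc_char _).mpr (by omega))
        have hne0 : dppPart (r :: rs) 1 (c - 1) ≠ 0 := by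
          simp only [dppPart, List.getD_cons_succ]
          rw [hvk]; omega
        have hcol := hD.2.1 0 (c - 1) hne0
        simp only [dppPart, List.getD_cons_succ, List.getD_cons_zero] at hcol
        rw [hvk] at hcol
        have hcc : c - 1 + 1 = c := by omega
        rw [hcc] at hcol
        have := (ha_char c).mp (by omega)
        omega
    -- facts about s
    have hs_ch : s.Chain' (· ≥ ·) := by
      simp only [List.Chain', List.isChain_iff_pairwise] at hr_ch ⊢
      exact hr_ch.sublist (List.drop_sublist _ _)
    have hs_getD : ∀ k, s.getD k 0 = r.getD (a + b + k) 0 := fun k => getD_drop r (a + b) k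
    have hs_lt : ∀ x ∈ s, x < n - 1 := by
      intro x hx
      have h1 : x ≤ s.getD 0 0 := mem_le_getD_zero hs_ch hx
      have h2 : ¬ (n - 1 ≤ r.getD (a + b) 0) := by rw [hab_char]; omega
      have h3 : s.getD 0 0 = r.getD (a + b) 0 := by simpa using hs_getD 0
      omega
    have hs_mem_r : ∀ x ∈ s, x ∈ r := fun x hx => List.mem_of_mem_drop hx
    -- explicit values in r
    have hr_k1 : ∀ k, k < a → r.getD k 0 = n := by
      intro k hk
      have hcnt : a ≤ r.length := ha_def ▸ List.count_le_length
      have h2 := (hr_bd _ (getD_mem (show k < r.length by omega) 0)).2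
      have h1 : n ≤ r.getD k 0 := (ha_char k).mpr hk
      omega
    have hr_k2 : ∀ k, a ≤ k → k < a + b → r.getD k 0 = n - 1 := by
      intro k h1 h2
      have h3 : n - 1 ≤ r.getD k 0 := (hab_char k).mpr h2
      have h4 : ¬ n ≤ r.getD k 0 := by rw [ha_char]; omega
      omega
    -- length and entries of r'
    have hr'_len : r'.length = r.length := by
      rw [hr'_def]
      simp only [List.length_append, List.length_replicate, hs_def, List.length_drop]
      omega
    have hr'_getD : ∀ k, r'.getD k 0 =
        if k < t + b + c then n else if k < a + b then n - 1 else r.getD k 0 := by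
      intro k
      rw [hr'_def, getD_rep_rep_app]
      have hsum : t + b + c + (a - t - c) = a + b := by omega
      rw [hsum]
      by_cases h1 : k < t + b + c
      · simp [h1]
      · by_cases h2 : k < a + b
        · simp [h1, h2]
        · rw [if_neg h1, if_neg h2, if_neg h1, if_neg h2, hs_getD]
          congr 1
          omega
    -- decomposition of r
    have hdecomp : r = List.replicate a n ++ List.replicate b (n - 1) ++ s := by
      apply ext_getD
      · simp only [List.length_append, List.length_replicate, hs_def, List.length_drop]
        omega
      · intro k
        rw [getD_rep_rep_app]
        by_cases h1 : k < a
        · rw [if_pos h1]; exact hr_k1 k h1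
        · by_cases h2 : k < a + b
          · rw [if_neg h1, if_pos h2]; exact hr_k2 k (by omega) h2
          · rw [if_neg h1, if_neg h2, hs_getD]
            congr 1
            omega
    -- counts in r' and s
    have hs_cnt_n : s.count n = 0 :=
      List.count_eq_zero.mpr (fun h => by have := hs_lt n h; omega)
    have hs_cnt_n1 : s.count (n - 1) = 0 :=
      List.count_eq_zero.mpr (fun h => by have := hs_lt _ h; omega)
    have hne1 : ¬ ((n : ℕ) = n - 1) := by omega
    have hne1' : ¬ (n - 1 = n) := by omega
    have hr'_cnt_n : r'.count n = t + b + c := by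
      rw [hr'_def]
      simp [List.count_append, List.count_replicate, hne1, hs_cnt_n]
      omega
    have hr'_cnt_n1 : r'.count (n - 1) = a - t - c := by
      rw [hr'_def]
      simp [List.count_append, List.count_replicate, hne1', hs_cnt_n1]
      omega
    -- bounds for the rows of rs
    have hrs_entry : ∀ i, i < rs.length → ∀ x ∈ rs.getD i [], x + i + 1 ≤ n := by
      intro i hi x hx
      have hgd : (r :: rs).getD (i + 1) [] = rs.getD i [] := List.getD_cons_succ ..
      have := entry_bound hD (i + 1) (by simp; omega) x (by rw [hgd]; exact hx)
      omega
    have hrs_len : ∀ i, i < rs.length → (rs.getD i []).length + i + 2 ≤ n := by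
      intro i hi
      have hgd : (r :: rs).getD (i + 1) [] = rs.getD i [] := List.getD_cons_succ ..
      have := length_bound hD (i + 1) (by simp; omega)
      rw [hgd] at this
      omega
    -- rho sums over rs
    have hrho1_rs : rho1D n rs = 0 := by
      rw [rho1D]
      apply List.sum_eq_zero
      intro x hx
      obtain ⟨rr, hrr, rfl⟩ := List.mem_map.mp hx
      rw [List.count_eq_zero]
      intro hmem
      obtain ⟨i, hi, rfl⟩ := List.mem_iff_getElem.mp hrr
      have := hrs_entry i hi n (by rwa [List.getD_eq_getElem _ _ hi])
      omega
    have hrho2_rs : rho2D n rs = c := by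
      cases rs with
      | nil => simp [rho2D, hc_def]
      | cons r2 rs2 =>
        rw [rho2D_cons]
        have h2sum : (rs2.map fun rr => rr.count (n - 1)).sum = 0 := by
          apply List.sum_eq_zero
          intro x hx
          obtain ⟨rr, hrr, rfl⟩ := List.mem_map.mp hx
          rw [List.count_eq_zero]
          intro hmem
          obtain ⟨i, hi, rfl⟩ := List.mem_iff_getElem.mp hrr
          have : (r2 :: rs2).getD (i + 1) [] = rs2[i] := by
            rw [List.getD_cons_succ]; exact List.getD_eq_getElem _ _ hi
          have := hrs_entry (i + 1) (by simp; omega) (n - 1) (by rw [this]; exact hmem)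
          omega
        have h2fil : rs2.filter (fun rr => rr.length = n - 1) = [] := by
          rw [List.filter_eq_nil_iff]
          intro rr hrr
          obtain ⟨i, hi, rfl⟩ := List.mem_iff_getElem.mp hrr
          have hgd : (r2 :: rs2).getD (i + 1) [] = rs2[i] := by
            rw [List.getD_cons_succ]; exact List.getD_eq_getElem _ _ hi
          have hlb := hrs_len (i + 1) (by simp; omega)
          rw [hgd] at hlb
          simp only [decide_eq_true_eq]
          omega
        have hlen2 : ¬ (r2.length = n - 1) := by
          have := hrs_len 0 (by simp)
          simp only [List.getD_cons_zero] at this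
          omega
        rw [rho2D, h2fil, if_neg hlen2]
        simp [h2sum, hc_def]
    -- rho values
    have hrho1_D : rho1D n (r :: rs) = a := by
      rw [rho1D_cons, hrho1_rs, ← ha_def]; omega
    have hrho2_D : rho2D n (r :: rs) = b + t + c := by
      rw [rho2D_cons, hrho2_rs, ← hb_def, ← ht_def]
    have hrho1_D' : rho1D n (r' :: rs) = t + b + c := by
      rw [rho1D_cons, hrho1_rs, hr'_cnt_n]; omega
    have hrho2_D' : rho2D n (r' :: rs) = a := by
      rw [rho2D_cons, hrho2_rs, hr'_cnt_n1, hr'_len, ← ht_def]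
      omega
    -- nu and mu
    have hval_eq : ∀ k, a + b ≤ k → r'.getD k 0 = r.getD k 0 := by
      intro k hk
      rw [hr'_getD, if_neg (by omega), if_neg (by omega)]
    have hval_ge : ∀ k, k < a + b → n - 1 ≤ r'.getD k 0 ∧ n - 1 ≤ r.getD k 0 := by
      intro k hk
      refine ⟨?_, (hab_char k).mpr hk⟩
      rw [hr'_getD]
      split_ifs <;> omega
    have hnu : nuD (r' :: rs) = nuD (r :: rs) := by
      rw [nuD_cons, nuD_cons, hr'_len]
      congr 1
      have hfeq : Finset.filter (fun k => k < r'.getD k 0) (Finset.range r.length)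
          = Finset.filter (fun k => k < r.getD k 0) (Finset.range r.length) := by
        apply Finset.filter_congr
        intro k hk
        simp only [Finset.mem_range] at hk
        by_cases hkab : k < a + b
        · obtain ⟨h1, h2⟩ := hval_ge k hkab
          have hkn : k < n - 1 := by omega
          constructor <;> intro <;> omega
        · rw [hval_eq k (by omega)]
      rw [hfeq]
    have hmu : muD (r' :: rs) = muD (r :: rs) := by
      rw [muD_cons, muD_cons, hr'_len]
      congr 1
      have hfeq : Finset.filter (fun k => r'.getD k 0 ≤ k) (Finset.range r.length)
          = Finset.filter (fun k => r.getD k 0 ≤ k) (Finset.range r.length) := by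
        apply Finset.filter_congr
        intro k hk
        simp only [Finset.mem_range] at hk
        by_cases hkab : k < a + b
        · obtain ⟨h1, h2⟩ := hval_ge k hkab
          have hkn : k < n - 1 := by omega
          constructor <;> intro <;> omega
        · rw [hval_eq k (by omega)]
      rw [hfeq]
    -- r' is a valid DPP first row
    have hIs : IsDPP n (r' :: rs) := by
      refine ⟨?_, ?_, ?_, ?_⟩
      · intro rr hrr
        rcases List.mem_cons.mp hrr with rfl | h
        · refine ⟨?_, ?_, ?_⟩
          · intro h0
            rw [h0] at hr'_len
            simp at hr'_len
            omega
          · rw [hr'_def, List.append_assoc]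
            apply chain'_replicate_append
            · apply chain'_replicate_append hs_ch
              intro x hx
              have := hs_lt x hx; omega
            · intro x hx
              rcases List.mem_append.mp hx with h | h
              · have := List.eq_of_mem_replicate h; omega
              · have := hs_lt x h; omega
          · intro x hx
            rw [hr'_def] at hx
            rcases List.mem_append.mp hx with h | h
            · rcases List.mem_append.mp h with h' | h'
              · have := List.eq_of_mem_replicate h'; omega
              · have := List.eq_of_mem_replicate h'; omega
            · exact ⟨(hr_bd x (hs_mem_r x h)).1, (hr_bd x (hs_mem_r x h)).2⟩
        · exact hD.1 rr (List.mem_cons_of_mem r h)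
      · intro i k
        cases i with
        | zero =>
          intro hne0
          simp only [dppPart, List.getD_cons_succ, List.getD_cons_zero] at hne0 ⊢
          have hv_le := hrow2_getD_le k
          have hcol := hD.2.1 0 k (by simpa [dppPart] using hne0)
          simp only [dppPart, List.getD_cons_succ, List.getD_cons_zero] at hcol
          rw [hr'_getD]
          split_ifs with h1 h2
          · omega
          · have hvlt : (rs.getD 0 []).getD k 0 < n - 1 := by
              by_contra hcon
              have hveq : n - 1 ≤ (rs.getD 0 []).getD k 0 := by omega
              have hkc := (hc_char k).mp hveq
              have := hc_t (by omega)
              omega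
            omega
          · exact hcol
        | succ i =>
          intro hne0
          have := hD.2.1 (i + 1) k (by simpa [dppPart, List.getD_cons_succ] using hne0)
          simpa [dppPart, List.getD_cons_succ] using this
      · intro i hi
        cases i with
        | zero =>
          simp only [dppPart, List.getD_cons_zero]
          rw [hr'_len, hr'_getD 0]
          split_ifs with h1 h2
          · omega
          · have ht0 : t = 0 := by omega
            have hne : ¬ (r.length = n - 1) := by
              intro hl
              rw [ht_def, if_pos hl] at ht0
              omega
            omega
          · exact hfirst
        | succ i =>
          have hi' : i + 1 < (r :: rs).length := by simpa using hi
          have := hD.2.2.1 (i + 1) hi'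
          simpa [dppPart, List.getD_cons_succ] using this
      · intro i
        cases i with
        | zero =>
          have := hD.2.2.2 0
          simp only [dppPart, List.getD_cons_succ, List.getD_cons_zero] at this ⊢
          rw [hr'_len]
          exact this
        | succ i =>
          have := hD.2.2.2 (i + 1)
          simpa [dppPart, List.getD_cons_succ] using this
    -- the involution property
    have hinv : dswap n (dswap n (r :: rs)) = r :: rs := by
      rw [hswap, dswap_cons]
      congr 1
      have e1 : (if r'.length = n - 1 then 1 else 0) = t := by rw [hr'_len, ← ht_def]
      have e2 : (rs.getD 0 []).count (n - 1) = c := hc_def.symm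
      rw [e1, e2, hr'_cnt_n, hr'_cnt_n1]
      have e3 : t + (a - t - c) + c = a := by omega
      have e4 : t + b + c - t - c = b := by omega
      have e5 : t + b + c + (a - t - c) = a + b := by omega
      rw [e3, e4, e5]
      have hl6 : (List.replicate (t + b + c) n ++ List.replicate (a - t - c) (n - 1)).length
          = a + b := by
        simp only [List.length_append, List.length_replicate]; omega
      have e6 : List.drop (a + b) r' = s := by
        show List.drop (a + b)
          (List.replicate (t + b + c) n ++ List.replicate (a - t - c) (n - 1) ++ s) = s
        rw [← hl6]
        exact List.drop_left
      rw [e6]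
      exact hdecomp.symm
    rw [hswap]
    exact ⟨hIs, hinv, hnu, hmu, by omega, by omega⟩

/-- The doubly-refined DPP generating function is symmetric in `z₁` and `z₂`;
equivalently, the joint distribution of `(ν, μ, ρ₁, ρ₂)` on `DPP(n)` is symmetric
under exchanging the values of `ρ₁` and `ρ₂`. -/
theorem ZDPP2_symm {R : Type*} [CommRing R] (n : ℕ) (hn : 1 ≤ n) :
    (∀ x y z₁ z₂ : R, ZDPP2 n x y z₁ z₂ = ZDPP2 n x y z₂ z₁) ∧
    (∀ p m k₁ k₂ : ℤ,
      {D ∈ DPPs n | (nuD D : ℤ) = p ∧ (muD D : ℤ) = m ∧ (rho1D n D : ℤ) = k₁ ∧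
        (rho2D n D : ℤ) = k₂}.ncard =
      {D ∈ DPPs n | (nuD D : ℤ) = p ∧ (muD D : ℤ) = m ∧ (rho1D n D : ℤ) = k₂ ∧
        (rho2D n D : ℤ) = k₁}.ncard) := by
  have hbij : Set.BijOn (dswap n) (DPPs n) (DPPs n) := by
    refine ⟨fun D hD => (dswap_props hD).1, fun D hD E hE hDE => ?_, fun D hD => ?_⟩
    · rw [← (dswap_props hD).2.1, ← (dswap_props hE).2.1, hDE]
    · exact ⟨dswap n D, (dswap_props hD).1, (dswap_props hD).2.1⟩
  constructor
  · intro x y z₁ z₂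
    refine finsum_mem_eq_of_bijOn (dswap n) hbij ?_
    intro D hD
    obtain ⟨-, -, hnu, hmu, h1, h2⟩ := dswap_props hD
    rw [hnu, hmu, h1, h2]
    ring
  · intro p m k₁ k₂
    have himg : {D ∈ DPPs n | (nuD D : ℤ) = p ∧ (muD D : ℤ) = m ∧ (rho1D n D : ℤ) = k₂ ∧
          (rho2D n D : ℤ) = k₁}
        = dswap n '' {D ∈ DPPs n | (nuD D : ℤ) = p ∧ (muD D : ℤ) = m ∧
          (rho1D n D : ℤ) = k₁ ∧ (rho2D n D : ℤ) = k₂} := by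
      ext E
      constructor
      · rintro ⟨hE, hp, hm, h1, h2⟩
        obtain ⟨hIs, hinv, hnu, hmu, hr1, hr2⟩ := dswap_props hE
        refine ⟨dswap n E, ⟨hIs, ?_, ?_, ?_, ?_⟩, hinv⟩
        · rw [hnu]; exact hp
        · rw [hmu]; exact hm
        · rw [hr1]; exact h2
        · rw [hr2]; exact h1
      · rintro ⟨D, ⟨hD, hp, hm, h1, h2⟩, rfl⟩
        obtain ⟨hIs, hinv, hnu, hmu, hr1, hr2⟩ := dswap_props hD
        exact ⟨hIs, by rw [hnu]; exact hp, by rw [hmu]; exact hm,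
          by rw [hr1]; exact h2, by rw [hr2]; exact h1⟩
    rw [himg, Set.ncard_image_of_injOn (hbij.injOn.mono (fun D hD => hD.1))]

end ASMDPP
end

section
/- Desnanot–Jacobi identity: for any n×n matrix M with entries in a commutative ring (n ≥ 2), any row indices 1 ≤ i₁ < i₂ ≤ n and column indices 1 ≤ j₁ < j₂ ≤ n, one has det(M) · det(M with rows i₁,i₂ and columns j₁,j₂ deleted) = det(M with row i₁ and column j₁ deleted) · det(M with row i₂ and column j₂ deleted) − det(M with row i₁ and column j₂ deleted) · det(M with row i₂ and column j₁ deleted). -/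
namespace ASMDPP

/-- The determinant of the square submatrix of `M` whose rows and columns are those
listed (in order) in `rows` and `cols` (always lists of the same length here). -/
def detOn {R : Type*} [CommRing R] (M : ℕ → ℕ → R) (rows cols : List ℕ) : R :=
  Matrix.det (Matrix.of fun i j : Fin rows.length => M (rows.getD i 0) (cols.getD j 0))

open Matrix

section Helpers

variable {R : Type*} [CommRing R]

lemma val_succAbove {k : ℕ} (a : Fin (k + 1)) (t : Fin k) :
    (a.succAbove t : ℕ) = if (t : ℕ) < (a : ℕ) then (t : ℕ) else (t : ℕ) + 1 := by
  rw [Fin.succAbove]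
  split_ifs with h1 h2 h2 <;>
    simp_all [Fin.lt_def, Fin.coe_castSucc, Fin.val_succ] <;> omega

lemma updateColumn_comm' {m n : Type*} [DecidableEq n] (X : Matrix m n R) {j₁ j₂ : n}
    (h : j₁ ≠ j₂) (c₁ c₂ : m → R) :
    (X.updateCol j₁ c₁).updateCol j₂ c₂ = (X.updateCol j₂ c₂).updateCol j₁ c₁ := by
  ext r s
  simp only [Matrix.updateCol_apply]
  split_ifs with h1 h2 <;> simp_all

lemma mul_updateColumn' {m n o : Type*} [Fintype n] [DecidableEq o]
    (A : Matrix m n R) (X : Matrix n o R) (j : o) (c : n → R) :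
    A * (X.updateCol j c) = (A * X).updateCol j (A.mulVec c) := by
  ext r s
  by_cases h : s = j <;>
    simp [Matrix.mul_apply, Matrix.updateCol_apply, h, Matrix.mulVec, dotProduct]

lemma submatrix_updateRow_of_injective {m k o p : Type*} [DecidableEq m] [DecidableEq k]
    (X : Matrix m o R) (f : k → m) (hf : Function.Injective f) (i : k) (c : o → R) (g : p → o) :
    (X.updateRow (f i) c).submatrix f g = (X.submatrix f g).updateRow i (c ∘ g) := by
  ext r s
  simp [Matrix.updateRow_apply, hf.eq_iff]

lemma single_comp_of_injective {α β : Type*} [DecidableEq α] [DecidableEq β]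
    (f : α → β) (hf : Function.Injective f) (i : α) :
    (Pi.single (f i) (1 : R)) ∘ f = Pi.single i 1 := by
  funext t
  simp [Pi.single_apply, hf.eq_iff]

lemma neg_one_pow_congr {p q : ℕ} (h : p % 2 = q % 2) : ((-1 : R)) ^ p = (-1 : R) ^ q := by
  rcases Nat.even_or_odd p with hp | hp
  · rw [Nat.even_iff] at hp
    rw [(Nat.even_iff.2 hp).neg_one_pow, (Nat.even_iff.2 (by omega)).neg_one_pow]
  · rw [Nat.odd_iff] at hp
    rw [(Nat.odd_iff.2 hp).neg_one_pow, (Nat.odd_iff.2 (by omega)).neg_one_pow]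

lemma det_two_updates {m : ℕ} (u v : Fin m → R) (b₁ b₂ : Fin m) (h : b₁ ≠ b₂) :
    Matrix.det (((1 : Matrix (Fin m) (Fin m) R).updateCol b₁ u).updateCol b₂ v)
      = u b₁ * v b₂ - v b₁ * u b₂ := by
  let U : Matrix (Fin m) (Fin 2) R := Matrix.of fun x s =>
    ![u x - (1 : Matrix (Fin m) (Fin m) R) x b₁,
      v x - (1 : Matrix (Fin m) (Fin m) R) x b₂] s
  let V : Matrix (Fin 2) (Fin m) R := Matrix.of fun s y =>
    (1 : Matrix (Fin m) (Fin m) R) (![b₁, b₂] s) y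
  have hB : ((1 : Matrix (Fin m) (Fin m) R).updateCol b₁ u).updateCol b₂ v = 1 + U * V := by
    ext x y
    simp only [Matrix.add_apply, Matrix.mul_apply, Fin.sum_univ_two, U, V, Matrix.of_apply,
      Matrix.updateCol_apply]
    rw [show (![b₁, b₂] (0 : Fin 2)) = b₁ from rfl, show (![b₁, b₂] (1 : Fin 2)) = b₂ from rfl]
    by_cases h2 : y = b₂
    · subst h2
      simp [Matrix.one_apply_ne h]
    · by_cases h1 : y = b₁
      · subst h1
        simp [Matrix.one_apply_ne (Ne.symm h2), h2]
      · simp [Matrix.one_apply_ne (Ne.symm h1), Matrix.one_apply_ne (Ne.symm h2), h1, h2]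
  rw [hB, Matrix.det_one_add_mul_comm]
  have hVU : (1 : Matrix (Fin 2) (Fin 2) R) + V * U = !![u b₁, v b₁; u b₂, v b₂] := by
    have hVU' : ∀ s t, (V * U) s t = U (![b₁, b₂] s) t := fun s t => by
      simp [V, Matrix.mul_apply, Matrix.one_apply]
    ext s t
    fin_cases s <;> fin_cases t <;> simp only [Matrix.add_apply, hVU'] <;>
      simp [U, Matrix.one_apply, ite_mul, Finset.sum_ite_eq,
        h, h.symm] <;> ring
  rw [hVU, Matrix.det_fin_two_of]

end Helpers

section Key

lemma key_domain {k : ℕ} {R : Type*} [CommRing R] [IsDomain R]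
    (A : Matrix (Fin (k + 2)) (Fin (k + 2)) R) (hA : A.det ≠ 0)
    (a₁ a₂ b₁ b₂ : Fin (k + 2)) (ha : a₁ < a₂) (hb : b₁ < b₂)
    (ha0 : a₂ ≠ 0) (hb0 : b₂ ≠ 0) :
    A.det * Matrix.det (A.submatrix (a₁.succAbove ∘ (a₂.pred ha0).succAbove)
        (b₁.succAbove ∘ (b₂.pred hb0).succAbove)) =
      Matrix.det (A.submatrix a₁.succAbove b₁.succAbove) *
        Matrix.det (A.submatrix a₂.succAbove b₂.succAbove) -
      Matrix.det (A.submatrix a₁.succAbove b₂.succAbove) *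
        Matrix.det (A.submatrix a₂.succAbove b₁.succAbove) := by
  have hbne : b₁ ≠ b₂ := Fin.ne_of_lt hb
  have hane : a₁ ≠ a₂ := Fin.ne_of_lt ha
  have hva : (a₁ : ℕ) < (a₂ : ℕ) := ha
  have hvb : (b₁ : ℕ) < (b₂ : ℕ) := hb
  set a₂' : Fin (k + 1) := a₂.pred ha0 with ha₂'
  set b₂' : Fin (k + 1) := b₂.pred hb0 with hb₂'
  have hca : (a₂' : ℕ) = (a₂ : ℕ) - 1 := by rw [ha₂', Fin.coe_pred]
  have hcb : (b₂' : ℕ) = (b₂ : ℕ) - 1 := by rw [hb₂', Fin.coe_pred]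
  have hsa : a₁.succAbove a₂' = a₂ := by
    apply Fin.ext
    rw [val_succAbove, hca]
    split_ifs <;> omega
  have hsb : b₁.succAbove b₂' = b₂ := by
    apply Fin.ext
    rw [val_succAbove, hcb]
    split_ifs <;> omega
  set d := A.det with hd
  set C : Matrix (Fin (k + 2)) (Fin (k + 2)) R :=
    (A.updateCol b₁ (Pi.single a₁ 1)).updateCol b₂ (Pi.single a₂ 1) with hCdef
  set Xdd := Matrix.det (A.submatrix (a₁.succAbove ∘ a₂'.succAbove)
      (b₁.succAbove ∘ b₂'.succAbove)) with hXdd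
  set X11 := Matrix.det (A.submatrix a₁.succAbove b₁.succAbove) with hX11
  set X22 := Matrix.det (A.submatrix a₂.succAbove b₂.succAbove) with hX22
  set X12 := Matrix.det (A.submatrix a₁.succAbove b₂.succAbove) with hX12
  set X21 := Matrix.det (A.submatrix a₂.succAbove b₁.succAbove) with hX21
  have hCT : Cᵀ = ((Aᵀ.updateRow b₂ (Pi.single a₂ 1)).updateRow b₁ (Pi.single a₁ 1)) := by
    rw [hCdef]
    ext r s
    simp only [Matrix.transpose_apply, Matrix.updateCol_apply, Matrix.updateRow_apply]
    split_ifs <;> simp_all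
  have hdetC : Matrix.det C =
      (-1 : R) ^ ((b₁ : ℕ) + (a₁ : ℕ)) * ((-1 : R) ^ ((b₂' : ℕ) + (a₂' : ℕ)) * Xdd) := by
    have h1 : Matrix.det C =
        Matrix.det ((Aᵀ.updateRow b₂ (Pi.single a₂ 1)).updateRow b₁ (Pi.single a₁ 1)) := by
      rw [← hCT, Matrix.det_transpose]
    rw [h1, ← Matrix.adjugate_apply, Matrix.adjugate_fin_succ_eq_det_submatrix]
    congr 1
    have h2 : (Aᵀ.updateRow b₂ (Pi.single a₂ 1)).submatrix b₁.succAbove a₁.succAbove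
        = (Aᵀ.submatrix b₁.succAbove a₁.succAbove).updateRow b₂'
            ((Pi.single a₂ (1 : R)) ∘ a₁.succAbove) := by
      conv_lhs => rw [← hsb]
      exact submatrix_updateRow_of_injective _ _ Fin.succAbove_right_injective _ _ _
    have h3 : (Pi.single a₂ (1 : R)) ∘ a₁.succAbove = Pi.single a₂' (1 : R) := by
      rw [← hsa]
      exact single_comp_of_injective _ Fin.succAbove_right_injective _
    rw [h2, h3, ← Matrix.adjugate_apply, Matrix.adjugate_fin_succ_eq_det_submatrix]
    congr 1
    rw [Matrix.submatrix_submatrix, hXdd, ← Matrix.det_transpose, Matrix.transpose_submatrix,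
      Matrix.transpose_transpose]
  set u : Fin (k + 2) → R := fun x => Matrix.adjugate A x a₁ with hu
  set v : Fin (k + 2) → R := fun x => Matrix.adjugate A x a₂ with hv
  set B := ((1 : Matrix (Fin (k + 2)) (Fin (k + 2)) R).updateCol b₁ u).updateCol b₂ v
    with hB
  have hdetB : Matrix.det B = u b₁ * v b₂ - v b₁ * u b₂ := det_two_updates u v b₁ b₂ hbne
  have hmulvec : ∀ a : Fin (k + 2),
      A.mulVec (fun x => Matrix.adjugate A x a) = d • (Pi.single a 1 : Fin (k + 2) → R) := by
    intro a
    funext r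
    have h4 : (A * Matrix.adjugate A) r a = (d • (1 : Matrix (Fin (k + 2)) (Fin (k + 2)) R)) r a := by
      rw [Matrix.mul_adjugate]
    simpa [Matrix.mul_apply, Matrix.mulVec, dotProduct, Matrix.one_apply, Pi.single_apply,
      eq_comm] using h4
  have hAB : A * B = (A.updateCol b₁ (d • (Pi.single a₁ 1 : Fin (k + 2) → R))).updateCol b₂
      (d • (Pi.single a₂ 1 : Fin (k + 2) → R)) := by
    rw [hB, mul_updateColumn', mul_updateColumn', Matrix.mul_one, hu, hv, hmulvec, hmulvec]
  have hrhs : Matrix.det (A * B) = d * (d * Matrix.det C) := by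
    rw [hAB, Matrix.det_updateCol_smul,
      updateColumn_comm' A hbne (d • (Pi.single a₁ 1 : Fin (k + 2) → R)) (Pi.single a₂ 1),
      Matrix.det_updateCol_smul,
      ← updateColumn_comm' A hbne (Pi.single a₁ 1) (Pi.single a₂ 1), ← hCdef]
  have hmain : u b₁ * v b₂ - v b₁ * u b₂ = d * Matrix.det C := by
    apply mul_left_cancel₀ hA
    rw [← hdetB, show d * B.det = (A * B).det from by rw [Matrix.det_mul]]
    exact hrhs
  have hu1 : u b₁ = (-1 : R) ^ ((a₁ : ℕ) + (b₁ : ℕ)) * X11 :=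
    Matrix.adjugate_fin_succ_eq_det_submatrix A b₁ a₁
  have hv2 : v b₂ = (-1 : R) ^ ((a₂ : ℕ) + (b₂ : ℕ)) * X22 :=
    Matrix.adjugate_fin_succ_eq_det_submatrix A b₂ a₂
  have hv1 : v b₁ = (-1 : R) ^ ((a₂ : ℕ) + (b₁ : ℕ)) * X21 :=
    Matrix.adjugate_fin_succ_eq_det_submatrix A b₁ a₂
  have hu2 : u b₂ = (-1 : R) ^ ((a₁ : ℕ) + (b₂ : ℕ)) * X12 :=
    Matrix.adjugate_fin_succ_eq_det_submatrix A b₂ a₁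
  set N : ℕ := (a₁ : ℕ) + (b₁ : ℕ) + ((a₂ : ℕ) + (b₂ : ℕ)) with hN
  have t1 : (-1 : R) ^ ((a₁ : ℕ) + (b₁ : ℕ)) * X11 * ((-1 : R) ^ ((a₂ : ℕ) + (b₂ : ℕ)) * X22)
      = (-1 : R) ^ N * (X11 * X22) := by
    rw [hN, pow_add]; ring
  have t2 : (-1 : R) ^ ((a₂ : ℕ) + (b₁ : ℕ)) * X21 * ((-1 : R) ^ ((a₁ : ℕ) + (b₂ : ℕ)) * X12)
      = (-1 : R) ^ N * (X21 * X12) := by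
    rw [show ((-1 : R)) ^ N = (-1 : R) ^ (((a₂ : ℕ) + (b₁ : ℕ)) + ((a₁ : ℕ) + (b₂ : ℕ))) from
      neg_one_pow_congr (by omega), pow_add]
    ring
  have t3 : d * ((-1 : R) ^ ((b₁ : ℕ) + (a₁ : ℕ)) * ((-1 : R) ^ ((b₂' : ℕ) + (a₂' : ℕ)) * Xdd))
      = (-1 : R) ^ N * (d * Xdd) := by
    rw [show ((-1 : R)) ^ N = (-1 : R) ^ (((b₁ : ℕ) + (a₁ : ℕ)) + ((b₂' : ℕ) + (a₂' : ℕ)) + 2) from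
      neg_one_pow_congr (by omega), pow_add, pow_add]
    ring
  have hfin : (-1 : R) ^ N * (X11 * X22) - (-1 : R) ^ N * (X21 * X12)
      = (-1 : R) ^ N * (d * Xdd) := by
    rw [← t1, ← t2, ← hu1, ← hv2, ← hv1, ← hu2, hmain, hdetC]
    exact t3
  have hS : ((-1 : R) ^ N) ≠ 0 := pow_ne_zero _ (neg_ne_zero.mpr one_ne_zero)
  apply mul_left_cancel₀ hS
  rw [show (-1 : R) ^ N * (d * Xdd) = (-1 : R) ^ N * (X11 * X22) - (-1 : R) ^ N * (X21 * X12)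
    from hfin.symm]
  ring

lemma key {k : ℕ} {R : Type*} [CommRing R]
    (A : Matrix (Fin (k + 2)) (Fin (k + 2)) R)
    (a₁ a₂ b₁ b₂ : Fin (k + 2)) (ha : a₁ < a₂) (hb : b₁ < b₂)
    (ha0 : a₂ ≠ 0) (hb0 : b₂ ≠ 0) :
    A.det * Matrix.det (A.submatrix (a₁.succAbove ∘ (a₂.pred ha0).succAbove)
        (b₁.succAbove ∘ (b₂.pred hb0).succAbove)) =
      Matrix.det (A.submatrix a₁.succAbove b₁.succAbove) *
        Matrix.det (A.submatrix a₂.succAbove b₂.succAbove) -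
      Matrix.det (A.submatrix a₁.succAbove b₂.succAbove) *
        Matrix.det (A.submatrix a₂.succAbove b₁.succAbove) := by
  let φ : MvPolynomial (Fin (k + 2) × Fin (k + 2)) ℤ →+* R :=
    MvPolynomial.eval₂Hom (Int.castRingHom R) fun p => A p.1 p.2
  let P := Matrix.mvPolynomialX (Fin (k + 2)) (Fin (k + 2)) ℤ
  have hP : P.map ⇑φ = A := by
    have h0 := Matrix.mvPolynomialX_map_eval₂ (Int.castRingHom R) A
    simpa [φ, P, MvPolynomial.coe_eval₂Hom] using h0
  have h := key_domain P (Matrix.det_mvPolynomialX_ne_zero _ ℤ) a₁ a₂ b₁ b₂ ha hb ha0 hb0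
  have h2 := congrArg φ h
  simp only [_root_.map_mul, _root_.map_sub, RingHom.map_det, RingHom.mapMatrix_apply,
    ← Matrix.submatrix_map, hP] at h2
  exact h2

end Key

section Lists

lemma getD_range'_append (s m : ℕ) (l : List ℕ) (t : ℕ) :
    ((List.range' s m) ++ l).getD t 0 = if t < m then s + t else l.getD (t - m) 0 := by
  induction m generalizing s t with
  | zero => simp
  | succ m ih =>
    rw [List.range'_succ]
    cases t with
    | zero => simp
    | succ t =>
      simp only [List.cons_append, List.getD_cons_succ, ih (s + 1) t]
      split_ifs <;> first | omega | (congr 1; omega) | (congr 2; omega)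

lemma getD_range' (s m t : ℕ) :
    (List.range' s m).getD t 0 = if t < m then s + t else 0 := by
  simpa using getD_range'_append s m [] t

lemma filter_range'_ne (n i : ℕ) (h1 : 1 ≤ i) (h2 : i ≤ n) :
    (List.range' 1 n).filter (· ≠ i) = List.range' 1 (i - 1) ++ List.range' (i + 1) (n - i) := by
  have hsplit : List.range' 1 (i - 1) ++ List.range' (1 + (i - 1)) ((n - i) + 1)
      = List.range' 1 ((n - i) + 1 + (i - 1)) := by
      rw [List.range'_append_1]; congr 1; omega
  rw [show (1 + (i - 1)) = i from by omega, show ((n - i) + 1 + (i - 1)) = n from by omega]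
    at hsplit
  rw [← hsplit, List.filter_append, List.range'_succ]
  congr 1
  · refine List.filter_eq_self.mpr fun a ha => ?_
    simp only [List.mem_range'_1] at ha
    simp only [ne_eq, decide_eq_true_eq]
    omega
  · rw [List.filter_cons_of_neg (by simp)]
    refine List.filter_eq_self.mpr fun a ha => ?_
    simp only [List.mem_range'_1] at ha
    simp only [ne_eq, decide_eq_true_eq]
    omega

lemma filter_range'_ne2 (n i j : ℕ) (h1 : 1 ≤ i) (hij : i < j) (h2 : j ≤ n) :
    (List.range' 1 n).filter (fun r => r ≠ i ∧ r ≠ j) =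
      List.range' 1 (i - 1) ++ (List.range' (i + 1) (j - i - 1) ++ List.range' (j + 1) (n - j)) := by
  have hs1 : List.range' (i + 1) (j - i - 1) ++ List.range' ((i + 1) + (j - i - 1)) ((n - j) + 1)
      = List.range' (i + 1) ((n - j) + 1 + (j - i - 1)) := by
      rw [List.range'_append_1]; congr 1; omega
  rw [show ((i + 1) + (j - i - 1)) = j from by omega,
    show ((n - j) + 1 + (j - i - 1)) = n - i from by omega] at hs1
  have hs2 : List.range' 1 (i - 1) ++ List.range' (1 + (i - 1)) ((n - i) + 1)
      = List.range' 1 ((n - i) + 1 + (i - 1)) := by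
      rw [List.range'_append_1]; congr 1; omega
  rw [show (1 + (i - 1)) = i from by omega, show ((n - i) + 1 + (i - 1)) = n from by omega] at hs2
  rw [← hs2, List.filter_append, List.range'_succ, List.filter_cons_of_neg (by simp),
    ← hs1, List.filter_append, List.range'_succ, List.filter_cons_of_neg (by simp [hij.ne'])]
  congr 1
  · refine List.filter_eq_self.mpr fun a ha => ?_
    simp only [List.mem_range'_1] at ha
    simp only [ne_eq, decide_eq_true_eq]
    constructor <;> omega
  congr 1
  · refine List.filter_eq_self.mpr fun a ha => ?_
    simp only [List.mem_range'_1] at ha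
    simp only [ne_eq, decide_eq_true_eq]
    constructor <;> omega
  · refine List.filter_eq_self.mpr fun a ha => ?_
    simp only [List.mem_range'_1] at ha
    simp only [ne_eq, decide_eq_true_eq]
    constructor <;> omega

lemma detOn_eq {R : Type*} [CommRing R] (M : ℕ → ℕ → R) (rows cols : List ℕ) {k : ℕ}
    (h1 : rows.length = k) (f g : Fin k → ℕ)
    (hf : ∀ t : Fin k, rows.getD (t : ℕ) 0 = f t)
    (hg : ∀ t : Fin k, cols.getD (t : ℕ) 0 = g t) :
    detOn M rows cols = Matrix.det (Matrix.of fun a b : Fin k => M (f a) (g b)) := by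
  subst h1
  unfold detOn
  congr 1
  ext a b
  simp only [Matrix.of_apply, hf a, hg b]

end Lists

/-- The Desnanot–Jacobi identity, for an `n × n` matrix `M` with rows and columns
indexed by `1, …, n`: deleted-row and deleted-column submatrices are encoded by
filtering the index list `[1, …, n]`. -/
theorem desnanot_jacobi {R : Type*} [CommRing R] (n : ℕ) (hn : 2 ≤ n)
    (M : ℕ → ℕ → R) (i₁ i₂ j₁ j₂ : ℕ) (hi₁ : 1 ≤ i₁) (hi : i₁ < i₂) (hi₂ : i₂ ≤ n)
    (hj₁ : 1 ≤ j₁) (hj : j₁ < j₂) (hj₂ : j₂ ≤ n) :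
    detOn M (List.range' 1 n) (List.range' 1 n) *
      detOn M ((List.range' 1 n).filter (fun r => r ≠ i₁ ∧ r ≠ i₂))
        ((List.range' 1 n).filter (fun c => c ≠ j₁ ∧ c ≠ j₂)) =
    detOn M ((List.range' 1 n).filter (· ≠ i₁)) ((List.range' 1 n).filter (· ≠ j₁)) *
      detOn M ((List.range' 1 n).filter (· ≠ i₂)) ((List.range' 1 n).filter (· ≠ j₂)) -
    detOn M ((List.range' 1 n).filter (· ≠ i₁)) ((List.range' 1 n).filter (· ≠ j₂)) *
      detOn M ((List.range' 1 n).filter (· ≠ i₂)) ((List.range' 1 n).filter (· ≠ j₁)) := by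
  obtain ⟨k, rfl⟩ : ∃ k, n = k + 2 := ⟨n - 2, by omega⟩
  let A : Matrix (Fin (k + 2)) (Fin (k + 2)) R :=
    Matrix.of fun a b => M ((a : ℕ) + 1) ((b : ℕ) + 1)
  let a₁ : Fin (k + 2) := ⟨i₁ - 1, by omega⟩
  let a₂ : Fin (k + 2) := ⟨i₂ - 1, by omega⟩
  let b₁ : Fin (k + 2) := ⟨j₁ - 1, by omega⟩
  let b₂ : Fin (k + 2) := ⟨j₂ - 1, by omega⟩
  have hva1 : (a₁ : ℕ) = i₁ - 1 := rfl
  have hva2 : (a₂ : ℕ) = i₂ - 1 := rfl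
  have hvb1 : (b₁ : ℕ) = j₁ - 1 := rfl
  have hvb2 : (b₂ : ℕ) = j₂ - 1 := rfl
  have ha : a₁ < a₂ := by rw [Fin.lt_def, hva1, hva2]; omega
  have hb : b₁ < b₂ := by rw [Fin.lt_def, hvb1, hvb2]; omega
  have ha0 : a₂ ≠ 0 := by
    intro h0
    have := congrArg Fin.val h0
    rw [hva2] at this
    simp at this
    omega
  have hb0 : b₂ ≠ 0 := by
    intro h0
    have := congrArg Fin.val h0
    rw [hvb2] at this
    simp at this
    omega
  have hca : ((a₂.pred ha0 : Fin (k + 1)) : ℕ) = i₂ - 2 := by rw [Fin.coe_pred, hva2]; omega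
  have hcb : ((b₂.pred hb0 : Fin (k + 1)) : ℕ) = j₂ - 2 := by rw [Fin.coe_pred, hvb2]; omega
  -- single-deletion getD bridging
  have getD1 : ∀ (i : ℕ), 1 ≤ i → i ≤ k + 2 → ∀ (a : Fin (k + 2)), (a : ℕ) = i - 1 →
      ∀ t : Fin (k + 1),
      ((List.range' 1 (k + 2)).filter (· ≠ i)).getD (t : ℕ) 0 = ((a.succAbove t : ℕ)) + 1 := by
    intro i h1 h2 a hva t
    have ht := t.isLt
    rw [filter_range'_ne (k + 2) i h1 h2, getD_range'_append, getD_range', val_succAbove, hva]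
    split_ifs <;> omega
  have len1 : ∀ (i : ℕ), 1 ≤ i → i ≤ k + 2 →
      ((List.range' 1 (k + 2)).filter (· ≠ i)).length = k + 1 := by
    intro i h1 h2
    rw [filter_range'_ne (k + 2) i h1 h2]
    simp only [List.length_append, List.length_range']
    omega
  have E0 : detOn M (List.range' 1 (k + 2)) (List.range' 1 (k + 2)) = A.det := by
    refine detOn_eq M _ _ (by simp) (fun t => (t : ℕ) + 1) (fun t => (t : ℕ) + 1) ?_ ?_ <;>
      · intro t
        have ht := t.isLt
        show (List.range' 1 (k + 2)).getD (t : ℕ) 0 = (t : ℕ) + 1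
        rw [getD_range']
        split_ifs <;> omega
  have E1 : ∀ (i j : ℕ), 1 ≤ i → i ≤ k + 2 → 1 ≤ j → j ≤ k + 2 →
      ∀ (a b : Fin (k + 2)), (a : ℕ) = i - 1 → (b : ℕ) = j - 1 →
      detOn M ((List.range' 1 (k + 2)).filter (· ≠ i)) ((List.range' 1 (k + 2)).filter (· ≠ j))
        = Matrix.det (A.submatrix a.succAbove b.succAbove) := by
    intro i j hi1 hi2 hj1 hj2 a b hva hvb
    exact detOn_eq M _ _ (len1 i hi1 hi2)
      (fun t => ((a.succAbove t : ℕ)) + 1) (fun t => ((b.succAbove t : ℕ)) + 1)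
      (getD1 i hi1 hi2 a hva) (getD1 j hj1 hj2 b hvb)
  -- double-deletion bridging
  have getD2 : ∀ (i j : ℕ), 1 ≤ i → i < j → j ≤ k + 2 →
      ∀ (a b : Fin (k + 2)) (h0 : b ≠ 0), (a : ℕ) = i - 1 → (b : ℕ) = j - 1 →
      ∀ t : Fin k,
      ((List.range' 1 (k + 2)).filter (fun r => r ≠ i ∧ r ≠ j)).getD (t : ℕ) 0
        = (((a.succAbove ∘ (b.pred h0).succAbove) t : ℕ)) + 1 := by
    intro i j h1 hij h2 a b h0 hva hvb t
    have ht := t.isLt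
    have hpb : ((b.pred h0 : Fin (k + 1)) : ℕ) = j - 2 := by rw [Fin.coe_pred, hvb]; omega
    rw [filter_range'_ne2 (k + 2) i j h1 hij h2, getD_range'_append, getD_range'_append,
      getD_range']
    simp only [Function.comp_apply]
    rw [val_succAbove, val_succAbove, hva, hpb]
    split_ifs <;> omega
  have len2 : ((List.range' 1 (k + 2)).filter (fun r => r ≠ i₁ ∧ r ≠ i₂)).length = k ∧
      ((List.range' 1 (k + 2)).filter (fun r => r ≠ j₁ ∧ r ≠ j₂)).length = k := by
    constructor <;>
      · rw [filter_range'_ne2 (k + 2) _ _ (by omega) (by omega) (by omega)]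
        simp only [List.length_append, List.length_range']
        omega
  have E2 : detOn M ((List.range' 1 (k + 2)).filter (fun r => r ≠ i₁ ∧ r ≠ i₂))
      ((List.range' 1 (k + 2)).filter (fun c => c ≠ j₁ ∧ c ≠ j₂))
      = Matrix.det (A.submatrix (a₁.succAbove ∘ (a₂.pred ha0).succAbove)
          (b₁.succAbove ∘ (b₂.pred hb0).succAbove)) := by
    exact detOn_eq M _ _ len2.1
      (fun t => (((a₁.succAbove ∘ (a₂.pred ha0).succAbove) t : ℕ)) + 1)
      (fun t => (((b₁.succAbove ∘ (b₂.pred hb0).succAbove) t : ℕ)) + 1)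
      (getD2 i₁ i₂ hi₁ hi hi₂ a₁ a₂ ha0 hva1 hva2)
      (getD2 j₁ j₂ hj₁ hj hj₂ b₁ b₂ hb0 hvb1 hvb2)
  rw [E0, E2, E1 i₁ j₁ hi₁ (by omega) hj₁ (by omega) a₁ b₁ hva1 hvb1,
    E1 i₂ j₂ (by omega) hi₂ (by omega) hj₂ a₂ b₂ hva2 hvb2,
    E1 i₁ j₂ hi₁ (by omega) (by omega) hj₂ a₁ b₂ hva1 hvb2,
    E1 i₂ j₁ (by omega) hi₂ hj₁ (by omega) a₂ b₁ hva2 hvb1]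
  exact key A a₁ a₂ b₁ b₂ ha hb ha0 hb0

end ASMDPP
end
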